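/- arXiv:1405.5096 — 2 statements merged into one kernel-verified Lean document; each statement's English description precedes it below -/
import Mathlib

section
/- Let (Z_t) for t ≥ n₀ be independent random variables with values in [0,B], let (B_t) be a {0,1}-valued predictable sequence (B_t is measurable with respect to the σ-algebra generated by Z_s, s ≤ t−1), let S_n = Σ_{t=n₀}^n B_t(Z_t − E[Z_t]) and t_n = Σ_{t=n₀}^n B_t. Let φ ∈ {n₀,…,T+1} be a stopping time such that on the event φ ≤ T one has t_φ ≥ s. Then P[S_φ ≥ t_φ·δ and φ ≤ T] ≤ exp(−2sδ²/B²). -/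
open MeasureTheory ProbabilityTheory

lemma aux_log_ineq (p : ℝ) (hp0 : 0 ≤ p) (hp1 : p ≤ 1) (h : ℝ) :
    Real.log (1 - p + p * Real.exp h) ≤ p * h + h ^ 2 / 8 := by
  set D : ℝ → ℝ := fun x => 1 - p + p * Real.exp x with hDdef
  have hD : ∀ x, 0 < D x := by
    intro x
    show (0:ℝ) < 1 - p + p * Real.exp x
    rcases le_or_gt 1 (Real.exp x) with hx | hx
    · nlinarith [Real.exp_pos x]
    · nlinarith [Real.exp_pos x]
  set g : ℝ → ℝ := fun x => p * x + x ^ 2 / 8 - Real.log (D x) with hgdef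
  set g' : ℝ → ℝ := fun x => p + x / 4 - p * Real.exp x / D x with hg'def
  have hDd : ∀ x, HasDerivAt D (p * Real.exp x) x := by
    intro x
    exact ((Real.hasDerivAt_exp x).const_mul p).const_add (1 - p)
  have hg : ∀ x, HasDerivAt g (g' x) x := by
    intro x
    have h1 : HasDerivAt (fun x : ℝ => p * x + x ^ 2 / 8) (p + x / 4) x := by
      have := ((hasDerivAt_pow 2 x).div_const 8).const_add 0
      have h2 : HasDerivAt (fun x : ℝ => p * x) p x := by
        simpa using (hasDerivAt_id x).const_mul p
      have h4 := h2.fun_add ((hasDerivAt_pow 2 x).div_const 8)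
      refine h4.congr_deriv ?_
      ring
    have h3 : HasDerivAt (fun x => Real.log (D x)) (p * Real.exp x / D x) x :=
      (hDd x).log (hD x).ne'
    exact h1.sub h3
  have hg' : ∀ x, HasDerivAt g'
      ((1 / 4 : ℝ) - (p * Real.exp x * D x - p * Real.exp x * (p * Real.exp x)) / (D x) ^ 2) x := by
    intro x
    have h1 : HasDerivAt (fun x : ℝ => p + x / 4) (1 / 4) x := by
      simpa using ((hasDerivAt_id x).div_const 4).const_add p
    have h2 : HasDerivAt (fun x => p * Real.exp x / D x)
        ((p * Real.exp x * D x - p * Real.exp x * (p * Real.exp x)) / (D x) ^ 2) x :=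
      ((Real.hasDerivAt_exp x).const_mul p).div (hDd x) (hD x).ne'
    exact h1.sub h2
  have hg'nonneg : ∀ x, 0 ≤ (1 / 4 : ℝ) -
      (p * Real.exp x * D x - p * Real.exp x * (p * Real.exp x)) / (D x) ^ 2 := by
    intro x
    have hDx := hD x
    have key : (p * Real.exp x * D x - p * Real.exp x * (p * Real.exp x)) / (D x) ^ 2 ≤ 1 / 4 := by
      rw [div_le_iff₀ (by positivity)]
      have hDx2 : D x = 1 - p + p * Real.exp x := rfl
      nlinarith [sq_nonneg ((1 - p) - p * Real.exp x), Real.exp_pos x]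
    linarith
  have hmono : Monotone g' :=
    monotone_of_deriv_nonneg (fun x => (hg' x).differentiableAt)
      (fun x => by rw [(hg' x).deriv]; exact hg'nonneg x)
  have hg'0 : g' 0 = 0 := by
    simp [hg'def, hDdef, Real.exp_zero]
  have hg0 : g 0 = 0 := by
    simp [hgdef, hDdef, Real.exp_zero]
  have hkey : 0 ≤ g h := by
    rcases le_or_gt 0 h with hh | hh
    · have hmg : MonotoneOn g (Set.Ici (0 : ℝ)) := by
        apply monotoneOn_of_deriv_nonneg (convex_Ici 0)
          (Continuous.continuousOn (by
            exact (Differentiable.continuous (fun x => (hg x).differentiableAt))))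
          (fun x hx => ((hg x).differentiableAt).differentiableWithinAt)
        intro x hx
        rw [(hg x).deriv]
        rw [interior_Ici] at hx
        have := hmono (le_of_lt hx)
        rw [hg'0] at this
        exact this
      have := hmg (Set.self_mem_Ici) (Set.mem_Ici.2 hh) hh
      rw [hg0] at this
      exact this
    · have hmg : AntitoneOn g (Set.Iic (0 : ℝ)) := by
        apply antitoneOn_of_deriv_nonpos (convex_Iic 0)
          (Continuous.continuousOn (by
            exact (Differentiable.continuous (fun x => (hg x).differentiableAt))))
          (fun x hx => ((hg x).differentiableAt).differentiableWithinAt)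
        intro x hx
        rw [(hg x).deriv]
        rw [interior_Iic] at hx
        have := hmono (le_of_lt hx)
        rw [hg'0] at this
        exact this
      have := hmg (Set.mem_Iic.2 hh.le) (Set.self_mem_Iic) hh.le
      rw [hg0] at this
      exact this
  have hkey' : 0 ≤ p * h + h ^ 2 / 8 - Real.log (1 - p + p * Real.exp h) := hkey
  linarith

lemma hoeffding_mgf {Ω : Type*} {mΩ : MeasurableSpace Ω} (P : Measure Ω) [IsProbabilityMeasure P]
    (B : ℝ) (hB : 0 < B) (X : Ω → ℝ) (hXm : StronglyMeasurable X)
    (hXb : ∀ ω, X ω ∈ Set.Icc 0 B) (l : ℝ) :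
    ∫ ω, Real.exp (l * (X ω - ∫ x, X x ∂P)) ∂P ≤ Real.exp (l ^ 2 * B ^ 2 / 8) := by
  have hXint : Integrable X P := by
    refine ⟨hXm.aestronglyMeasurable, HasFiniteIntegral.of_bounded (C := B) ?_⟩
    filter_upwards with ω
    rw [Real.norm_eq_abs, abs_le]
    exact ⟨by linarith [(hXb ω).1], (hXb ω).2⟩
  set μ : ℝ := ∫ x, X x ∂P with hμdef
  have hμ0 : 0 ≤ μ := integral_nonneg fun ω => (hXb ω).1
  have hμB : μ ≤ B := by
    have := integral_mono hXint (integrable_const B) fun ω => (hXb ω).2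
    simpa using this
  set p : ℝ := μ / B with hpdef
  have hp0 : 0 ≤ p := div_nonneg hμ0 hB.le
  have hp1 : p ≤ 1 := (div_le_one hB).2 hμB
  set h : ℝ := l * B with hhdef
  set c1 : ℝ := Real.exp (l * (0 - μ)) with hc1def
  set c2 : ℝ := Real.exp (l * (B - μ)) with hc2def
  -- pointwise convexity bound
  have hpt : ∀ ω, Real.exp (l * (X ω - μ)) ≤ c1 + X ω * ((c2 - c1) / B) := by
    intro ω
    set y := X ω with hydef
    have hy0 : 0 ≤ y := (hXb ω).1
    have hyB : y ≤ B := (hXb ω).2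
    have ha : (0:ℝ) ≤ (B - y) / B := div_nonneg (by linarith) hB.le
    have hb : (0:ℝ) ≤ y / B := by positivity
    have hab : (B - y) / B + y / B = 1 := by field_simp; ring
    have hconv := convexOn_exp.2 (Set.mem_univ (l * (0 - μ))) (Set.mem_univ (l * (B - μ)))
      ha hb hab
    simp only [smul_eq_mul] at hconv
    have harg : (B - y) / B * (l * (0 - μ)) + y / B * (l * (B - μ)) = l * (y - μ) := by
      rw [div_mul_eq_mul_div, div_mul_eq_mul_div, ← add_div, div_eq_iff hB.ne']
      ring
    rw [harg] at hconv
    have hsum : (B - y) / B * c1 + y / B * c2 = c1 + y * ((c2 - c1) / B) := by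
      field_simp
      ring
    linarith [hconv, hsum.symm.le]
  -- integrate
  have hexpint : Integrable (fun ω => Real.exp (l * (X ω - μ))) P := by
    refine ⟨((Real.continuous_exp.comp (continuous_const.mul
      ((continuous_id.sub continuous_const)))).comp_stronglyMeasurable hXm).aestronglyMeasurable,
      HasFiniteIntegral.of_bounded (C := Real.exp (|l| * B)) ?_⟩
    filter_upwards with ω
    rw [Real.norm_eq_abs, abs_of_pos (Real.exp_pos _)]
    apply Real.exp_le_exp.2
    have h1 : |X ω - μ| ≤ B := by
      rw [abs_le]; constructor <;> [linarith [(hXb ω).1]; linarith [(hXb ω).2]]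
    calc l * (X ω - μ) ≤ |l * (X ω - μ)| := le_abs_self _
      _ = |l| * |X ω - μ| := abs_mul _ _
      _ ≤ |l| * B := by apply mul_le_mul_of_nonneg_left h1 (abs_nonneg l)
  have hrhsint : Integrable (fun ω => c1 + X ω * ((c2 - c1) / B)) P :=
    (integrable_const c1).add (hXint.mul_const _)
  have hint : ∫ ω, Real.exp (l * (X ω - μ)) ∂P ≤ c1 + μ * ((c2 - c1) / B) := by
    calc ∫ ω, Real.exp (l * (X ω - μ)) ∂P ≤ ∫ ω, c1 + X ω * ((c2 - c1) / B) ∂P :=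
          integral_mono hexpint hrhsint hpt
      _ = c1 + μ * ((c2 - c1) / B) := by
          rw [integral_add (integrable_const c1) (hXint.mul_const _), integral_const,
            integral_mul_const]
          simp [hμdef]
  -- final bound via aux_log_ineq
  have hpos : (0:ℝ) < 1 - p + p * Real.exp h := by
    rcases le_or_gt 1 (Real.exp h) with hx | hx
    · nlinarith [Real.exp_pos h]
    · nlinarith [Real.exp_pos h]
  have hlog := aux_log_ineq p hp0 hp1 h
  have h2 : 1 - p + p * Real.exp h ≤ Real.exp (p * h + h ^ 2 / 8) := by
    rw [← Real.exp_log hpos]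
    exact Real.exp_le_exp.2 hlog
  have hident : c1 + μ * ((c2 - c1) / B) = Real.exp (-(p * h)) * (1 - p + p * Real.exp h) := by
    rw [hc1def, hc2def]
    have hph : p * h = l * μ := by rw [hpdef, hhdef]; field_simp
    have e1 : l * (0 - μ) = -(p * h) := by rw [hph]; ring
    have e2 : l * (B - μ) = -(p * h) + h := by rw [hph, hhdef]; ring
    rw [e1, e2, Real.exp_add]
    have hμp : μ = p * B := by rw [hpdef, div_mul_cancel₀ _ hB.ne']
    rw [hμp]
    field_simp
    ring
  have hfinal : c1 + μ * ((c2 - c1) / B) ≤ Real.exp (l ^ 2 * B ^ 2 / 8) := by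
    rw [hident]
    calc Real.exp (-(p * h)) * (1 - p + p * Real.exp h)
        ≤ Real.exp (-(p * h)) * Real.exp (p * h + h ^ 2 / 8) :=
          mul_le_mul_of_nonneg_left h2 (Real.exp_pos _).le
      _ = Real.exp (h ^ 2 / 8) := by rw [← Real.exp_add]; ring_nf
      _ = Real.exp (l ^ 2 * B ^ 2 / 8) := by rw [hhdef]; ring_nf
  exact hint.trans hfinal

lemma indep_mono' {Ω : Type*} {mΩ : MeasurableSpace Ω} {μ : Measure Ω}
    {m₁ m₂ m₃ m₄ : MeasurableSpace Ω} (h : Indep m₁ m₂ μ) (h₁ : m₃ ≤ m₁) (h₂ : m₄ ≤ m₂) :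
    Indep m₃ m₄ μ := by
  rw [Indep_iff] at h ⊢
  exact fun t1 t2 ht1 ht2 => h t1 t2 (h₁ _ ht1) (h₂ _ ht2)

lemma integrable_of_bdd {Ω : Type*} {mΩ : MeasurableSpace Ω} {P : Measure Ω} [IsFiniteMeasure P]
    {f : Ω → ℝ} {C : ℝ} (hm : Measurable f) (hb : ∀ ω, |f ω| ≤ C) : Integrable f P :=
  ⟨hm.aestronglyMeasurable, HasFiniteIntegral.of_bounded (C := C)
    (Filter.Eventually.of_forall fun ω => by simpa [Real.norm_eq_abs] using hb ω)⟩

theorem stmt_4 {Ω : Type*} {mΩ : MeasurableSpace Ω} (P : Measure Ω) [IsProbabilityMeasure P]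
    (B : ℝ) (hB : 0 < B) (n₀ T : ℤ) (hT : n₀ ≤ T) (s : ℕ) (δ : ℝ) (hδ : 0 < δ)
    (Z : ℤ → Ω → ℝ) (hZm : ∀ t, StronglyMeasurable (Z t))
    (hZb : ∀ t ω, Z t ω ∈ Set.Icc 0 B)
    (hindep : iIndepFun Z P)
    (Bsel : ℤ → Ω → ℝ) (hB01 : ∀ t ω, Bsel t ω = 0 ∨ Bsel t ω = 1)
    (hBm : ∀ t, Measurable[(MeasureTheory.Filtration.natural Z hZm) (t - 1)] (Bsel t))
    (φ : Ω → ℤ) (hφ : IsStoppingTime (MeasureTheory.Filtration.natural Z hZm) (fun ω => (φ ω : WithTop ℤ)))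
    (hφr : ∀ ω, φ ω ∈ Set.Icc n₀ (T + 1))
    (hφs : ∀ ω, φ ω ≤ T → (s : ℝ) ≤ ∑ t ∈ Finset.Icc n₀ (φ ω), Bsel t ω) :
    P {ω | (∑ t ∈ Finset.Icc n₀ (φ ω), Bsel t ω) * δ ≤
            ∑ t ∈ Finset.Icc n₀ (φ ω), Bsel t ω * (Z t ω - ∫ x, Z t x ∂P) ∧
          φ ω ≤ T}
      ≤ ENNReal.ofReal (Real.exp (-2 * (s : ℝ) * δ ^ 2 / B ^ 2)) := by
  set F := MeasureTheory.Filtration.natural Z hZm with hFdef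
  set μZ : ℤ → ℝ := fun t => ∫ x, Z t x ∂P with hμZdef
  set l : ℝ := 4 * δ / B ^ 2 with hldef
  set c : ℝ := l ^ 2 * B ^ 2 / 8 with hcdef
  have hl0 : 0 < l := by rw [hldef]; positivity
  set St : ℤ → Ω → ℝ := fun n ω => ∑ t ∈ Finset.Icc n₀ n, Bsel t ω * (Z t ω - μZ t)
    with hStdef
  set tt : ℤ → Ω → ℝ := fun n ω => ∑ t ∈ Finset.Icc n₀ n, Bsel t ω with httdef
  set G : ℤ → Ω → ℝ := fun n ω =>
    Real.exp (l * St (min (φ ω) n) ω - c * tt (min (φ ω) n) ω) with hGdef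
  -- basic measurability
  have hZmeas : ∀ t, Measurable (Z t) := fun t => (hZm t).measurable
  have hZF : ∀ t k : ℤ, t ≤ k → Measurable[F k] (Z t) := fun t k htk =>
    ((MeasureTheory.Filtration.stronglyAdapted_natural hZm t).measurable).mono (F.mono htk) le_rfl
  have hBF : ∀ t k : ℤ, t - 1 ≤ k → Measurable[F k] (Bsel t) := fun t k htk =>
    (hBm t).mono (F.mono htk) le_rfl
  have hStm : ∀ k n : ℤ, k ≤ n → Measurable[F n] (St k) := by
    intro k n hkn
    apply Finset.measurable_sum
    intro t ht
    simp only [Finset.mem_Icc] at ht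
    exact (hBF t n (by omega)).mul ((hZF t n (by omega)).sub measurable_const)
  have httm : ∀ k n : ℤ, k ≤ n → Measurable[F n] (tt k) := by
    intro k n hkn
    apply Finset.measurable_sum
    intro t ht
    simp only [Finset.mem_Icc] at ht
    exact hBF t n (by omega)
  -- representation of the stopped process
  have hGrep : ∀ n : ℤ, n₀ - 1 ≤ n → G n = fun ω => ∑ k ∈ Finset.Icc (n₀ - 1) n,
      Set.indicator {ω' | min (φ ω') n = k}
        (fun ω' => Real.exp (l * St k ω' - c * tt k ω')) ω := by
    intro n hn
    funext ω
    have hφ1 := (hφr ω).1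
    have hmem : min (φ ω) n ∈ Finset.Icc (n₀ - 1) n := by
      simp only [Finset.mem_Icc]
      omega
    rw [Finset.sum_eq_single_of_mem (min (φ ω) n) hmem]
    · rw [Set.indicator_of_mem (by exact rfl)]
    · intro k hk hne
      refine Set.indicator_of_notMem ?_ _
      intro hmem'
      have hq : min (φ ω) n = k := hmem'
      exact hne hq.symm
  have hGmF : ∀ n : ℤ, n₀ - 1 ≤ n → Measurable[F n] (G n) := by
    intro n hn
    rw [hGrep n hn]
    apply Finset.measurable_sum
    intro k hk
    simp only [Finset.mem_Icc] at hk
    have hset : MeasurableSet[F n] {ω' | min (φ ω') n = k} :=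
      F.mono hk.2 _ (by
          have h := (hφ.min_const n).measurableSet_eq_of_countable k
          simp only [← WithTop.coe_min, WithTop.coe_inj] at h
          exact h)
    exact Measurable.indicator
      ((((hStm k n hk.2).const_mul l).sub ((httm k n hk.2).const_mul c)).exp) hset
  have hGmeas : ∀ n : ℤ, n₀ - 1 ≤ n → Measurable (G n) := fun n hn =>
    (hGmF n hn).mono (F.le n) le_rfl
  -- bounds
  have hμZb : ∀ t, 0 ≤ μZ t ∧ μZ t ≤ B := by
    intro t
    have hint : Integrable (Z t) P :=
      integrable_of_bdd (hZmeas t) (C := B) fun ω => by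
        rw [abs_le]; exact ⟨by linarith [(hZb t ω).1], (hZb t ω).2⟩
    constructor
    · exact integral_nonneg fun ω => (hZb t ω).1
    · have := integral_mono hint (integrable_const B) fun ω => (hZb t ω).2
      simpa using this
  have hBsb : ∀ t ω, 0 ≤ Bsel t ω ∧ Bsel t ω ≤ 1 := by
    intro t ω
    rcases hB01 t ω with h | h <;> rw [h] <;> norm_num
  set N : ℕ := (T + 2 - n₀).toNat with hNdef
  have hcard : ∀ k : ℤ, k ≤ T + 1 → ((Finset.Icc n₀ k).card : ℝ) ≤ N := by
    intro k hk
    rw [Int.card_Icc]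
    have : (k + 1 - n₀).toNat ≤ N := by rw [hNdef]; omega
    exact_mod_cast this
  have hStb : ∀ k : ℤ, ∀ ω, k ≤ T + 1 → |St k ω| ≤ N * B := by
    intro k ω hk
    calc |St k ω| ≤ ∑ t ∈ Finset.Icc n₀ k, |Bsel t ω * (Z t ω - μZ t)| :=
          Finset.abs_sum_le_sum_abs _ _
      _ ≤ ∑ t ∈ Finset.Icc n₀ k, B := by
          apply Finset.sum_le_sum
          intro t ht
          rw [abs_mul]
          have h1 : |Bsel t ω| ≤ 1 := by
            rw [abs_le]; exact ⟨by linarith [(hBsb t ω).1], (hBsb t ω).2⟩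
          have h2 : |Z t ω - μZ t| ≤ B := by
            rw [abs_le]
            constructor
            · linarith [(hZb t ω).1, (hμZb t).2]
            · linarith [(hZb t ω).2, (hμZb t).1]
          calc |Bsel t ω| * |Z t ω - μZ t| ≤ 1 * B := by
                apply mul_le_mul h1 h2 (abs_nonneg _) zero_le_one
            _ = B := one_mul B
      _ = (Finset.Icc n₀ k).card * B := by rw [Finset.sum_const, nsmul_eq_mul]
      _ ≤ N * B := by
          apply mul_le_mul_of_nonneg_right (hcard k hk) hB.le
  have httb : ∀ k : ℤ, ∀ ω, k ≤ T + 1 → |tt k ω| ≤ (N : ℝ) := by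
    intro k ω hk
    calc |tt k ω| ≤ ∑ t ∈ Finset.Icc n₀ k, |Bsel t ω| := Finset.abs_sum_le_sum_abs _ _
      _ ≤ ∑ t ∈ Finset.Icc n₀ k, 1 := by
          apply Finset.sum_le_sum
          intro t ht
          rw [abs_le]; exact ⟨by linarith [(hBsb t ω).1], (hBsb t ω).2⟩
      _ = (Finset.Icc n₀ k).card := by rw [Finset.sum_const, nsmul_eq_mul, mul_one]
      _ ≤ N := hcard k hk
  set C : ℝ := Real.exp (|l| * (N * B) + |c| * N) with hCdef
  have hGb : ∀ n : ℤ, ∀ ω, G n ω ≤ C := by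
    intro n ω
    have hk : min (φ ω) n ≤ T + 1 := le_trans (min_le_left _ _) (hφr ω).2
    rw [hGdef, hCdef]
    apply Real.exp_le_exp.2
    have h1 := hStb (min (φ ω) n) ω hk
    have h2 := httb (min (φ ω) n) ω hk
    calc l * St (min (φ ω) n) ω - c * tt (min (φ ω) n) ω
        ≤ |l * St (min (φ ω) n) ω - c * tt (min (φ ω) n) ω| := le_abs_self _
      _ ≤ |l| * |St (min (φ ω) n) ω| + |c| * |tt (min (φ ω) n) ω| := by
          calc |l * St (min (φ ω) n) ω - c * tt (min (φ ω) n) ω|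
              ≤ |l * St (min (φ ω) n) ω| + |c * tt (min (φ ω) n) ω| := abs_sub _ _
            _ = |l| * |St (min (φ ω) n) ω| + |c| * |tt (min (φ ω) n) ω| := by
                rw [abs_mul, abs_mul]
      _ ≤ |l| * (N * B) + |c| * N := by
          apply add_le_add
          · exact mul_le_mul_of_nonneg_left h1 (abs_nonneg l)
          · exact mul_le_mul_of_nonneg_left h2 (abs_nonneg c)
  have hG0 : ∀ n : ℤ, ∀ ω, 0 < G n ω := fun n ω => Real.exp_pos _
  have hGint : ∀ n : ℤ, n₀ - 1 ≤ n → Integrable (G n) P := by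
    intro n hn
    apply integrable_of_bdd (hGmeas n hn) (C := C)
    intro ω
    rw [abs_of_pos (hG0 n ω)]
    exact hGb n ω
  -- induction
  have key : ∀ k : ℕ, ∀ n : ℤ, n = n₀ - 1 + k → n ≤ T + 1 → ∫ ω, G n ω ∂P ≤ 1 := by
    intro k
    induction k with
    | zero =>
      intro n hn _
      have : G n = fun _ => 1 := by
        funext ω
        have h1 : min (φ ω) n = n := min_eq_right (by have := (hφr ω).1; omega)
        have h2 : Finset.Icc n₀ n = ∅ := Finset.Icc_eq_empty (by omega)
        rw [hGdef]
        simp only [h1, hStdef, httdef, h2, Finset.sum_empty]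
        norm_num [Real.exp_zero]
      rw [this]
      simp
    | succ k ih =>
      intro n hn hnT
      have hn0 : n₀ ≤ n := by omega
      have ihn : ∫ ω, G (n - 1) ω ∂P ≤ 1 := ih (n - 1) (by omega) (by omega)
      set A : Ω → ℝ := fun ω => if n ≤ φ ω then Bsel n ω else 0 with hAdef
      set f : ℝ → ℝ := fun z => Real.exp (l * (z - μZ n) - c) - 1 with hfdef
      set H : Ω → ℝ := fun ω => G (n - 1) ω * A ω with hHdef
      have hrec : ∀ ω, G n ω = G (n - 1) ω + H ω * f (Z n ω) := by
        intro ω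
        have hHω : H ω = G (n - 1) ω * A ω := rfl
        rcases le_or_gt n (φ ω) with hcase | hcase
        · have h1 : min (φ ω) n = n := min_eq_right hcase
          have h2 : min (φ ω) (n - 1) = n - 1 := min_eq_right (by omega)
          have hnot : n ∉ Finset.Icc n₀ (n - 1) := by simp only [Finset.mem_Icc]; omega
          have hins : Finset.Icc n₀ n = insert n (Finset.Icc n₀ (n - 1)) := by
            ext x
            simp only [Finset.mem_Icc, Finset.mem_insert]
            omega
          have hSn : St n ω = Bsel n ω * (Z n ω - μZ n) + St (n - 1) ω := by
            simp only [hStdef]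
            rw [hins, Finset.sum_insert hnot]
          have htn : tt n ω = Bsel n ω + tt (n - 1) ω := by
            simp only [httdef]
            rw [hins, Finset.sum_insert hnot]
          have hA : A ω = Bsel n ω := by
            rw [hAdef]
            simp only [if_pos hcase]
          have hGn : G n ω = Real.exp (l * (Bsel n ω * (Z n ω - μZ n) + St (n - 1) ω)
              - c * (Bsel n ω + tt (n - 1) ω)) := by
            simp only [hGdef]
            rw [h1, hSn, htn]
          have hGn1 : G (n - 1) ω = Real.exp (l * St (n - 1) ω - c * tt (n - 1) ω) := by
            simp only [hGdef]
            rw [h2]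
          have hfZ : f (Z n ω) = Real.exp (l * (Z n ω - μZ n) - c) - 1 := rfl
          rw [hGn, hHω, hGn1, hA, hfZ]
          rcases hB01 n ω with hb | hb
          · rw [hb]
            have harg0 : l * (0 * (Z n ω - μZ n) + St (n - 1) ω) - c * (0 + tt (n - 1) ω)
                = l * St (n - 1) ω - c * tt (n - 1) ω := by ring
            rw [harg0]
            ring
          · rw [hb]
            have harg : l * (1 * (Z n ω - μZ n) + St (n - 1) ω) - c * (1 + tt (n - 1) ω)
                = (l * St (n - 1) ω - c * tt (n - 1) ω) + (l * (Z n ω - μZ n) - c) := by ring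
            rw [harg, Real.exp_add]
            ring
        · have h1 : min (φ ω) n = φ ω := min_eq_left (by omega)
          have h2 : min (φ ω) (n - 1) = φ ω := min_eq_left (by omega)
          have hA : A ω = 0 := by
            rw [hAdef]
            simp only [if_neg (by omega : ¬ n ≤ φ ω)]
          have hGn : G n ω = Real.exp (l * St (φ ω) ω - c * tt (φ ω) ω) := by
            simp only [hGdef]
            rw [h1]
          have hGn1 : G (n - 1) ω = Real.exp (l * St (φ ω) ω - c * tt (φ ω) ω) := by
            simp only [hGdef]
            rw [h2]
          rw [hGn, hHω, hGn1, hA]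
          ring
      -- measurability and bounds for H and f ∘ Z n
      have hsetF : MeasurableSet[F (n - 1)] {ω' | n ≤ φ ω'} := by
        have : {ω' | n ≤ φ ω'} = {ω' | φ ω' ≤ n - 1}ᶜ := by
          ext ω'
          simp only [Set.mem_setOf_eq, Set.mem_compl_iff]
          omega
        rw [this]
        have h := hφ (n - 1)
        simp only [WithTop.coe_le_coe] at h
        exact h.compl
      have hAmF : Measurable[F (n - 1)] A :=
        Measurable.ite hsetF (hBm n) measurable_const
      have hHmF : Measurable[F (n - 1)] H := (hGmF (n - 1) (by omega)).mul hAmF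
      have hHmeas : Measurable H := hHmF.mono (F.le _) le_rfl
      have hAb : ∀ ω, 0 ≤ A ω ∧ A ω ≤ 1 := by
        intro ω
        rw [hAdef]
        simp only
        split_ifs
        · exact hBsb n ω
        · norm_num
      have hHb : ∀ ω, 0 ≤ H ω ∧ H ω ≤ C := by
        intro ω
        have hHω : H ω = G (n - 1) ω * A ω := rfl
        rw [hHω]
        constructor
        · exact mul_nonneg (hG0 (n - 1) ω).le (hAb ω).1
        · calc G (n - 1) ω * A ω ≤ G (n - 1) ω * 1 :=
              mul_le_mul_of_nonneg_left (hAb ω).2 (hG0 (n - 1) ω).le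
            _ = G (n - 1) ω := mul_one _
            _ ≤ C := hGb (n - 1) ω
      have hCpos : 0 < C := Real.exp_pos _
      have hHint : Integrable H P := by
        apply integrable_of_bdd hHmeas (C := C)
        intro ω
        rw [abs_of_nonneg (hHb ω).1]
        exact (hHb ω).2
      have hfm : Measurable f := by
        rw [hfdef]
        exact (Measurable.exp (((measurable_id.sub measurable_const).const_mul l).sub
          measurable_const)).sub measurable_const
      set Cf : ℝ := Real.exp (|l| * B + |c|) + 1 with hCfdef
      have hfb : ∀ ω, |f (Z n ω)| ≤ Cf := by
        intro ω
        rw [hfdef]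
        simp only
        have harg : |l * (Z n ω - μZ n) - c| ≤ |l| * B + |c| := by
          have h2 : |Z n ω - μZ n| ≤ B := by
            rw [abs_le]
            constructor
            · linarith [(hZb n ω).1, (hμZb n).2]
            · linarith [(hZb n ω).2, (hμZb n).1]
          calc |l * (Z n ω - μZ n) - c| ≤ |l * (Z n ω - μZ n)| + |c| := abs_sub _ _
            _ = |l| * |Z n ω - μZ n| + |c| := by rw [abs_mul]
            _ ≤ |l| * B + |c| := by
                have := mul_le_mul_of_nonneg_left h2 (abs_nonneg l)
                linarith
        rw [abs_le]
        constructor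
        · have : (0:ℝ) < Real.exp (l * (Z n ω - μZ n) - c) := Real.exp_pos _
          rw [hCfdef]
          have : (0:ℝ) < Real.exp (|l| * B + |c|) := Real.exp_pos _
          nlinarith [Real.exp_pos (l * (Z n ω - μZ n) - c)]
        · rw [hCfdef]
          have h3 : Real.exp (l * (Z n ω - μZ n) - c) ≤ Real.exp (|l| * B + |c|) :=
            Real.exp_le_exp.2 (le_trans (le_abs_self _) harg)
          linarith
      have hfZmeas : Measurable fun ω => f (Z n ω) := hfm.comp (hZmeas n)
      have hfZint : Integrable (fun ω => f (Z n ω)) P :=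
        integrable_of_bdd hfZmeas (C := Cf) hfb
      have hprodint : Integrable (fun ω => H ω * f (Z n ω)) P := by
        apply integrable_of_bdd (hHmeas.mul hfZmeas) (C := C * Cf)
        intro ω
        rw [Pi.mul_apply, abs_mul]
        apply mul_le_mul _ (hfb ω) (abs_nonneg _) hCpos.le
        rw [abs_of_nonneg (hHb ω).1]
        exact (hHb ω).2
      -- independence
      have hindepHZ : IndepFun H (Z n) P := by
        rw [IndepFun_iff_Indep]
        have hbig : Indep (⨆ i ∈ {i : ℤ | i ≤ n - 1}, MeasurableSpace.comap (Z i) inferInstance)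
            (⨆ i ∈ ({n} : Set ℤ), MeasurableSpace.comap (Z i) inferInstance) P := by
          apply indep_iSup_of_disjoint (fun i => (hZm i).measurable.comap_le) hindep.iIndep
          rw [Set.disjoint_left]
          intro a ha hb
          simp only [Set.mem_setOf_eq] at ha
          simp only [Set.mem_singleton_iff] at hb
          omega
        have hsing : (⨆ i ∈ ({n} : Set ℤ), MeasurableSpace.comap (Z i)
            (inferInstance : MeasurableSpace ℝ)) = MeasurableSpace.comap (Z n) inferInstance := by
          simp
        have hFle : (F (n - 1) : MeasurableSpace Ω) ≤
            ⨆ i ∈ {i : ℤ | i ≤ n - 1}, MeasurableSpace.comap (Z i) inferInstance := le_of_eq rfl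
        exact indep_mono' hbig (le_trans hHmF.comap_le hFle) (le_of_eq hsing.symm)
      have hindepHf : IndepFun H (fun ω => f (Z n ω)) P := by
        have := hindepHZ.comp measurable_id hfm
        simpa [Function.comp_def] using this
      have hmul : ∫ ω, H ω * f (Z n ω) ∂P = (∫ ω, H ω ∂P) * ∫ ω, f (Z n ω) ∂P :=
        hindepHf.integral_fun_mul_eq_mul_integral hHint.aestronglyMeasurable hfZint.aestronglyMeasurable
      -- the mgf bound
      have hfint_nonpos : ∫ ω, f (Z n ω) ∂P ≤ 0 := by
        have hmgf := hoeffding_mgf P B hB (Z n) (hZm n) (hZb n) l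
        have hexpint : Integrable (fun ω => Real.exp (l * (Z n ω - μZ n))) P := by
          apply integrable_of_bdd (Measurable.exp (((hZmeas n).sub measurable_const).const_mul l))
            (C := Real.exp (|l| * B))
          intro ω
          rw [abs_of_pos (Real.exp_pos _)]
          apply Real.exp_le_exp.2
          have h2 : |Z n ω - μZ n| ≤ B := by
            rw [abs_le]
            constructor
            · linarith [(hZb n ω).1, (hμZb n).2]
            · linarith [(hZb n ω).2, (hμZb n).1]
          calc l * (Z n ω - μZ n) ≤ |l * (Z n ω - μZ n)| := le_abs_self _
            _ = |l| * |Z n ω - μZ n| := abs_mul _ _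
            _ ≤ |l| * B := mul_le_mul_of_nonneg_left h2 (abs_nonneg l)
        have hfeq : (fun ω => f (Z n ω))
            = fun ω => Real.exp (l * (Z n ω - μZ n)) * Real.exp (-c) - 1 := by
          funext ω
          rw [hfdef]
          simp only
          rw [← Real.exp_add]
          ring_nf
        rw [hfeq, integral_sub (hexpint.mul_const _) (integrable_const 1),
          integral_mul_const, integral_const]
        simp only [probReal_univ, smul_eq_mul, one_mul]
        have h1 : (∫ ω, Real.exp (l * (Z n ω - μZ n)) ∂P) * Real.exp (-c)
            ≤ Real.exp c * Real.exp (-c) := by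
          apply mul_le_mul_of_nonneg_right _ (Real.exp_pos _).le
          rw [hcdef]
          exact hmgf
        rw [← Real.exp_add] at h1
        simp only [add_neg_cancel, Real.exp_zero] at h1
        linarith
      have hHnonneg : 0 ≤ ∫ ω, H ω ∂P := integral_nonneg fun ω => (hHb ω).1
      have hcorr : ∫ ω, H ω * f (Z n ω) ∂P ≤ 0 := by
        rw [hmul]
        exact mul_nonpos_of_nonneg_of_nonpos hHnonneg hfint_nonpos
      -- conclude the induction step
      have hGeq : (fun ω => G n ω) = fun ω => G (n - 1) ω + H ω * f (Z n ω) :=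
        funext hrec
      calc ∫ ω, G n ω ∂P = ∫ ω, (G (n - 1) ω + H ω * f (Z n ω)) ∂P := by rw [hGeq]
        _ = (∫ ω, G (n - 1) ω ∂P) + ∫ ω, H ω * f (Z n ω) ∂P :=
            integral_add (hGint (n - 1) (by omega)) hprodint
        _ ≤ 1 + 0 := add_le_add ihn hcorr
        _ = 1 := by norm_num
  -- apply at T + 1 and conclude by Markov
  have hGTint : ∫ ω, G (T + 1) ω ∂P ≤ 1 := by
    apply key (T + 2 - n₀).toNat (T + 1) _ le_rfl
    omega
  set K : ℝ := Real.exp (2 * (s:ℝ) * δ ^ 2 / B ^ 2) with hKdef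
  have hKpos : 0 < K := Real.exp_pos _
  have hsub : {ω | (∑ t ∈ Finset.Icc n₀ (φ ω), Bsel t ω) * δ ≤
      ∑ t ∈ Finset.Icc n₀ (φ ω), Bsel t ω * (Z t ω - ∫ x, Z t x ∂P) ∧ φ ω ≤ T}
      ⊆ {ω | K ≤ G (T + 1) ω} := by
    intro ω hω
    obtain ⟨hev1, hev2⟩ := hω
    have hmin : min (φ ω) (T + 1) = φ ω := min_eq_left (hφr ω).2
    have hts : (s : ℝ) ≤ tt (φ ω) ω := hφs ω hev2
    have hev1' : tt (φ ω) ω * δ ≤ St (φ ω) ω := hev1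
    have hlδc : l * δ - c = 2 * δ ^ 2 / B ^ 2 := by
      rw [hcdef, hldef]
      field_simp
      ring
    have h2δ : 0 < 2 * δ ^ 2 / B ^ 2 := by positivity
    show K ≤ G (T + 1) ω
    rw [hGdef]
    simp only [hmin]
    rw [hKdef]
    apply Real.exp_le_exp.2
    have step1 : l * (tt (φ ω) ω * δ) ≤ l * St (φ ω) ω :=
      mul_le_mul_of_nonneg_left hev1' hl0.le
    have step2 : (s : ℝ) * (2 * δ ^ 2 / B ^ 2) ≤ tt (φ ω) ω * (2 * δ ^ 2 / B ^ 2) :=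
      mul_le_mul_of_nonneg_right hts h2δ.le
    have step3 : tt (φ ω) ω * (l * δ - c) = tt (φ ω) ω * (2 * δ ^ 2 / B ^ 2) := by
      rw [hlδc]
    calc 2 * (s:ℝ) * δ ^ 2 / B ^ 2 = (s:ℝ) * (2 * δ ^ 2 / B ^ 2) := by ring
      _ ≤ tt (φ ω) ω * (2 * δ ^ 2 / B ^ 2) := step2
      _ = tt (φ ω) ω * (l * δ - c) := step3.symm
      _ = l * (tt (φ ω) ω * δ) - c * tt (φ ω) ω := by ring
      _ ≤ l * St (φ ω) ω - c * tt (φ ω) ω := by linarith [step1]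
  have hmarkov := mul_meas_ge_le_integral_of_nonneg
    (Filter.Eventually.of_forall fun ω => (hG0 (T + 1) ω).le)
    (hGint (T + 1) (by omega)) K
  set E := {ω | (∑ t ∈ Finset.Icc n₀ (φ ω), Bsel t ω) * δ ≤
      ∑ t ∈ Finset.Icc n₀ (φ ω), Bsel t ω * (Z t ω - ∫ x, Z t x ∂P) ∧ φ ω ≤ T} with hEdef
  have hmono : P E ≤ P {ω | K ≤ G (T + 1) ω} := measure_mono hsub
  have hfin : P E ≠ ⊤ := measure_ne_top P E
  have hfin2 : P {ω | K ≤ G (T + 1) ω} ≠ ⊤ := measure_ne_top P _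
  have htoReal : (P E).toReal ≤ Real.exp (-2 * (s:ℝ) * δ ^ 2 / B ^ 2) := by
    have h1 : (P E).toReal ≤ (P {ω | K ≤ G (T + 1) ω}).toReal :=
      ENNReal.toReal_mono hfin2 hmono
    have h2 : K * (P {ω | K ≤ G (T + 1) ω}).toReal ≤ 1 := le_trans hmarkov hGTint
    have h3 : (P {ω | K ≤ G (T + 1) ω}).toReal ≤ 1 / K := by
      rw [le_div_iff₀ hKpos]
      linarith [h2]
    have h4 : 1 / K = Real.exp (-2 * (s:ℝ) * δ ^ 2 / B ^ 2) := by
      rw [hKdef, one_div, ← Real.exp_neg]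
      congr 1
      ring
    linarith
  calc P E = ENNReal.ofReal (P E).toReal := (ENNReal.ofReal_toReal hfin).symm
    _ ≤ ENNReal.ofReal (Real.exp (-2 * (s:ℝ) * δ ^ 2 / B ^ 2)) :=
        ENNReal.ofReal_le_ofReal htoReal
end

section
/- In the two-arm windowed setting where E[μ̂_k(n)] ≤ E[μ̂_{k′}(n)] − Δ for n ∈ Λ, with Λ ⊆ ∪_s Λ(s), t_k(n) ≥ εs and t_{k′}(n) ≥ εs for n ∈ Λ(s), and |Λ(s) ∩ [n₀, n₀+τ]| ≤ 1, one has E[Σ_{n=n₀}^{n₀+τ} 1{n ∈ Λ, μ̂_k(n) > μ̂_{k′}(n)}] ≤ 4·log(τ)/(εΔ²) + 4. -/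
open MeasureTheory ProbabilityTheory
open scoped Classical ENNReal

section AuxLemmas

open Real

/-- Hoeffding's lemma, log-mgf form. -/
lemma hoeff_log (μ c : ℝ) (h0 : 0 ≤ μ) (h1 : μ ≤ 1) (hc : 0 ≤ c) :
    Real.log (1 - μ + μ * Real.exp c) - c * μ ≤ c ^ 2 / 8 := by
  have hD : ∀ t : ℝ, 0 < 1 - μ + μ * Real.exp t := by
    intro t
    rcases eq_or_lt_of_le h0 with h | h
    · simp [← h]
    · nlinarith [Real.exp_pos t]
  set D : ℝ → ℝ := fun t => 1 - μ + μ * Real.exp t with hDdef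
  set f : ℝ → ℝ := fun t => Real.log (D t) - t * μ - t ^ 2 / 8 with hfdef
  set f' : ℝ → ℝ := fun t => μ * Real.exp t / D t - μ - t / 4 with hf'def
  set g' : ℝ → ℝ := fun t => μ * (1 - μ) * Real.exp t / (D t) ^ 2 - 1 / 4 with hg'def
  have hDd : ∀ t, HasDerivAt D (μ * Real.exp t) t := by
    intro t
    have : HasDerivAt (fun t : ℝ => 1 - μ + μ * Real.exp t) (0 + μ * Real.exp t) t :=
      (hasDerivAt_const t (1 - μ)).add ((Real.hasDerivAt_exp t).const_mul μ)
    rw [zero_add] at this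
    exact this
  have hf : ∀ t, HasDerivAt f (f' t) t := by
    intro t
    have h1' : HasDerivAt (fun t => Real.log (D t)) (μ * Real.exp t / D t) t :=
      (hDd t).log (hD t).ne'
    have h2 : HasDerivAt (fun t : ℝ => t * μ) μ t := by
      simpa using (hasDerivAt_id t).mul_const μ
    have h3 : HasDerivAt (fun t : ℝ => t ^ 2 / 8) (t / 4) t := by
      have := (hasDerivAt_pow 2 t).div_const 8
      exact this.congr_deriv (by norm_num; ring)
    exact (h1'.sub h2).sub h3
  have hg : ∀ t, HasDerivAt f' (g' t) t := by
    intro t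
    have hnum : HasDerivAt (fun t => μ * Real.exp t) (μ * Real.exp t) t :=
      (Real.hasDerivAt_exp t).const_mul μ
    have hq : HasDerivAt (fun t => μ * Real.exp t / D t)
        ((μ * Real.exp t * D t - μ * Real.exp t * (μ * Real.exp t)) / (D t) ^ 2) t :=
      hnum.div (hDd t) (hD t).ne'
    have h4 : HasDerivAt (fun t : ℝ => t / 4) (1 / 4) t := by
      simpa using (hasDerivAt_id t).div_const 4
    have heq : (μ * Real.exp t * D t - μ * Real.exp t * (μ * Real.exp t)) / (D t) ^ 2
        = μ * (1 - μ) * Real.exp t / (D t) ^ 2 := by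
      congr 1
      simp only [hDdef]
      ring
    rw [heq] at hq
    exact (hq.sub_const μ).sub h4
  have hg'le : ∀ t, g' t ≤ 0 := by
    intro t
    have hD2 : 0 < (D t) ^ 2 := pow_pos (hD t) 2
    have key : 4 * (μ * (1 - μ) * Real.exp t) ≤ (D t) ^ 2 := by
      have : (D t) ^ 2 = (1 - μ + μ * Real.exp t) ^ 2 := rfl
      rw [this]
      nlinarith [sq_nonneg ((1 - μ) - μ * Real.exp t)]
    have harith : ∀ E x : ℝ, 0 < E ^ 2 → 4 * x ≤ E ^ 2 → x / E ^ 2 - 1 / 4 ≤ 0 := by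
      intro E x hE h
      have hx : x / E ^ 2 ≤ 1 / 4 := by
        rw [div_le_iff₀ hE]; linarith
      linarith
    exact harith (D t) (μ * (1 - μ) * Real.exp t) hD2 key
  have hf'le : ∀ t, 0 ≤ t → f' t ≤ 0 := by
    intro t ht
    have hanti : AntitoneOn f' (Set.Ici 0) := by
      refine antitoneOn_of_deriv_nonpos (convex_Ici 0)
        (fun x _ => (hg x).continuousAt.continuousWithinAt)
        (fun x _ => (hg x).differentiableAt.differentiableWithinAt) ?_
      intro x _
      rw [(hg x).deriv]
      exact hg'le x
    have h0' : f' 0 = 0 := by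
      simp [hf'def, hDdef]
    have := hanti (Set.mem_Ici.2 le_rfl) (Set.mem_Ici.2 ht) ht
    simpa [h0'] using this
  have hfle : f c ≤ f 0 := by
    have hanti : AntitoneOn f (Set.Ici 0) := by
      refine antitoneOn_of_deriv_nonpos (convex_Ici 0)
        (fun x _ => (hf x).continuousAt.continuousWithinAt)
        (fun x _ => (hf x).differentiableAt.differentiableWithinAt) ?_
      intro x hx
      rw [(hf x).deriv]
      exact hf'le x (le_of_lt (by simpa using hx))
    exact hanti (Set.mem_Ici.2 le_rfl) (Set.mem_Ici.2 hc) hc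
  have hf0 : f 0 = 0 := by simp [hfdef, hDdef]
  have hfin : Real.log (D c) - c * μ - c ^ 2 / 8 ≤ 0 := by
    rw [← hf0]; exact hfle
  have : Real.log (1 - μ + μ * Real.exp c) = Real.log (D c) := rfl
  rw [this]
  linarith

/-- MGF bound for a [0,1]-valued random variable. -/
lemma mgf_bound {Ω : Type*} {mΩ : MeasurableSpace Ω} (P : Measure Ω) [IsProbabilityMeasure P]
    (X : Ω → ℝ) (hm : Measurable X) (hb : ∀ ω, X ω ∈ Set.Icc (0 : ℝ) 1)
    (c : ℝ) (hc : 0 ≤ c) :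
    ∫ ω, Real.exp (c * (X ω - ∫ x, X x ∂P)) ∂P ≤ Real.exp (c ^ 2 / 8) := by
  have hXint : Integrable X P := by
    refine (integrable_const (1 : ℝ)).mono' hm.aestronglyMeasurable ?_
    refine Filter.Eventually.of_forall fun ω => ?_
    rw [Real.norm_eq_abs, abs_of_nonneg (hb ω).1]
    exact (hb ω).2
  set μ := ∫ x, X x ∂P with hμdef
  have hμ0 : 0 ≤ μ := integral_nonneg fun ω => (hb ω).1
  have hμ1 : μ ≤ 1 := by
    have : ∫ x, X x ∂P ≤ ∫ _x, (1 : ℝ) ∂P :=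
      integral_mono hXint (integrable_const 1) fun ω => (hb ω).2
    simpa using this
  have hexpint : Integrable (fun ω => Real.exp (c * X ω)) P := by
    refine (integrable_const (Real.exp c)).mono'
      ((Real.measurable_exp.comp (hm.const_mul c)).aestronglyMeasurable) ?_
    refine Filter.Eventually.of_forall fun ω => ?_
    rw [Real.norm_eq_abs, Real.abs_exp]
    exact Real.exp_le_exp.2 (by nlinarith [(hb ω).1, (hb ω).2])
  have hconv : ∀ ω, Real.exp (c * X ω) ≤ 1 - X ω + X ω * Real.exp c := by
    intro ω
    have h := convexOn_exp.2 (Set.mem_univ (0 : ℝ)) (Set.mem_univ c)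
      (show (0:ℝ) ≤ 1 - X ω by linarith [(hb ω).2]) ((hb ω).1)
      (show (1 - X ω) + X ω = 1 by ring)
    simp only [smul_eq_mul, mul_zero, zero_add, Real.exp_zero, mul_one] at h
    calc Real.exp (c * X ω) = Real.exp (X ω * c) := by rw [mul_comm]
      _ ≤ (1 - X ω) + X ω * Real.exp c := h
      _ = 1 - X ω + X ω * Real.exp c := by ring
  have ia : Integrable (fun ω => 1 - X ω) P := (integrable_const 1).sub hXint
  have ib : Integrable (fun ω => X ω * Real.exp c) P := hXint.mul_const _
  have hint2 : Integrable (fun ω => 1 - X ω + X ω * Real.exp c) P := ia.add ib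
  have hmono : ∫ ω, Real.exp (c * X ω) ∂P ≤ 1 - μ + μ * Real.exp c := by
    have h1 : ∫ ω, Real.exp (c * X ω) ∂P ≤ ∫ ω, (1 - X ω + X ω * Real.exp c) ∂P :=
      integral_mono hexpint hint2 hconv
    have h2 : ∫ ω, (1 - X ω + X ω * Real.exp c) ∂P = 1 - μ + μ * Real.exp c := by
      rw [integral_add ia ib, integral_sub (integrable_const 1) hXint,
        integral_mul_const, integral_const]
      simp [hμdef]
    linarith
  have hD : 0 < 1 - μ + μ * Real.exp c := by
    rcases eq_or_lt_of_le hμ0 with h | h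
    · simp [← h]
    · nlinarith [Real.exp_pos c]
  calc ∫ ω, Real.exp (c * (X ω - μ)) ∂P
      = Real.exp (-(c * μ)) * ∫ ω, Real.exp (c * X ω) ∂P := by
        rw [← integral_const_mul]
        congr 1; ext ω
        rw [← Real.exp_add]; ring_nf
    _ ≤ Real.exp (-(c * μ)) * (1 - μ + μ * Real.exp c) :=
        mul_le_mul_of_nonneg_left hmono (Real.exp_nonneg _)
    _ = Real.exp (Real.log (1 - μ + μ * Real.exp c) - c * μ) := by
        rw [Real.exp_sub, Real.exp_log hD, Real.exp_neg]; ring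
    _ ≤ Real.exp (c ^ 2 / 8) := Real.exp_le_exp.2 (hoeff_log μ c hμ0 hμ1 hc)

lemma super_bound {Ω : Type*} {mΩ : MeasurableSpace Ω} (P : Measure Ω) [IsProbabilityMeasure P]
    (G : ℕ → MeasurableSpace Ω) (hGle : ∀ i, G i ≤ mΩ) (hGmono : Monotone G)
    (B X : ℕ → Ω → ℝ)
    (hB01 : ∀ t ω, B t ω = 0 ∨ B t ω = 1)
    (hBmeas : ∀ t, Measurable[G (t - 1)] (B t))
    (hXmeas : ∀ t, Measurable (X t))
    (hXmeasG : ∀ t, Measurable[G t] (X t))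
    (hXb : ∀ t ω, X t ω ∈ Set.Icc (0 : ℝ) 1)
    (hind : ∀ t, 1 ≤ t → Indep (G (t - 1)) (MeasurableSpace.comap (X t) inferInstance) P)
    (c : ℝ) (hc : 0 ≤ c) (lo : ℕ) (hlo : 1 ≤ lo) :
    ∀ hi, (∫ ω, ∏ t ∈ Finset.Icc lo hi,
        (1 - B t ω + B t ω * Real.exp (c * (X t ω - ∫ x, X t x ∂P) - c ^ 2 / 8)) ∂P) ≤ 1 := by
  -- abbreviations
  set g : ℕ → Ω → ℝ := fun t ω =>
    1 - B t ω + B t ω * Real.exp (c * (X t ω - ∫ x, X t x ∂P) - c ^ 2 / 8) with hgdef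
  have hec1 : (1 : ℝ) ≤ Real.exp c := by
    rw [show (1:ℝ) = Real.exp 0 by simp]; exact Real.exp_le_exp.2 hc
  have hμb : ∀ t, 0 ≤ ∫ x, X t x ∂P := fun t => integral_nonneg fun ω => (hXb t ω).1
  have hgb : ∀ t ω, 0 ≤ g t ω ∧ g t ω ≤ Real.exp c := by
    intro t ω
    have hexp : Real.exp (c * (X t ω - ∫ x, X t x ∂P) - c ^ 2 / 8) ≤ Real.exp c := by
      apply Real.exp_le_exp.2
      have h1 : X t ω - ∫ x, X t x ∂P ≤ 1 := by linarith [(hXb t ω).2, hμb t]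
      nlinarith [sq_nonneg c]
    rcases hB01 t ω with h | h <;> simp only [hgdef, h]
    · constructor
      · norm_num
      · norm_num
        linarith
    · constructor
      · norm_num
        positivity
      · norm_num
        simpa using hexp
  have hgmeas : ∀ t, Measurable[G t] (g t) := by
    intro t
    have hB : Measurable[G t] (B t) := (hBmeas t).mono (hGmono (Nat.sub_le t 1)) le_rfl
    have hX : Measurable[G t] (X t) := hXmeasG t
    exact ((measurable_const.sub hB).add
      (hB.mul (Real.measurable_exp.comp ((hX.sub measurable_const).const_mul c |>.sub
        measurable_const))))
  -- bounded+measurable → integrable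
  have intb : ∀ (f : Ω → ℝ) (C : ℝ), Measurable f → (∀ ω, |f ω| ≤ C) → Integrable f P := by
    intro f C hf hb
    exact (integrable_const C).mono' hf.aestronglyMeasurable
      (Filter.Eventually.of_forall fun ω => by simpa using hb ω)
  intro hi
  induction hi with
  | zero =>
      rw [Finset.Icc_eq_empty (by omega : ¬ lo ≤ 0)]
      simp
  | succ n ih =>
      by_cases hlon : lo ≤ n + 1
      · have hins : Finset.Icc lo (n + 1) = insert (n + 1) (Finset.Icc lo n) := by
          ext x; simp only [Finset.mem_Icc, Finset.mem_insert]; omega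
        have hnotmem : (n + 1) ∉ Finset.Icc lo n := by simp
        -- prefix product
        set Pr : Ω → ℝ := fun ω => ∏ t ∈ Finset.Icc lo n, g t ω with hPrdef
        have hPrmG : Measurable[G n] Pr := by
          apply Finset.measurable_prod
          intro t ht
          exact (hgmeas t).mono (hGmono (Finset.mem_Icc.1 ht).2) le_rfl
        have hPrm : Measurable Pr := hPrmG.mono (hGle n) le_rfl
        have hPrnn : ∀ ω, 0 ≤ Pr ω := fun ω =>
          Finset.prod_nonneg fun t _ => (hgb t ω).1
        have hPrub : ∀ ω, Pr ω ≤ Real.exp c ^ (n + 1) := by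
          intro ω
          calc Pr ω ≤ ∏ _t ∈ Finset.Icc lo n, Real.exp c :=
                Finset.prod_le_prod (fun t _ => (hgb t ω).1) (fun t _ => (hgb t ω).2)
            _ = Real.exp c ^ (Finset.Icc lo n).card := by rw [Finset.prod_const]
            _ ≤ Real.exp c ^ (n + 1) := by
                apply pow_le_pow_right₀ hec1
                rw [Nat.card_Icc]; omega
        set C : ℝ := Real.exp c ^ (n + 1) with hCdef
        have hPrabs : ∀ ω, |Pr ω| ≤ C := fun ω => by
          rw [abs_of_nonneg (hPrnn ω)]; exact hPrub ω
        have hPrint : Integrable Pr P := intb Pr C hPrm hPrabs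
        -- new factor pieces
        set u : ℕ := n + 1 with hudef
        set Y : Ω → ℝ := fun ω =>
          Real.exp (c * (X u ω - ∫ x, X u x ∂P) - c ^ 2 / 8) with hYdef
        have hYm : Measurable Y :=
          Real.measurable_exp.comp ((((hXmeas u).sub measurable_const).const_mul c).sub
            measurable_const)
        have hYb : ∀ ω, 0 ≤ Y ω ∧ Y ω ≤ Real.exp c := by
          intro ω
          refine ⟨Real.exp_nonneg _, Real.exp_le_exp.2 ?_⟩
          have h1 : X u ω - ∫ x, X u x ∂P ≤ 1 := by linarith [(hXb u ω).2, hμb u]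
          nlinarith [sq_nonneg c]
        have hYint : Integrable Y P := by
          refine intb Y (Real.exp c) hYm fun ω => ?_
          rw [abs_of_nonneg (hYb ω).1]; exact (hYb ω).2
        have hYint1 : ∫ ω, Y ω ∂P ≤ 1 := by
          have h1 : ∫ ω, Y ω ∂P
              = (∫ ω, Real.exp (c * (X u ω - ∫ x, X u x ∂P)) ∂P) * Real.exp (-(c ^ 2 / 8)) := by
            rw [← integral_mul_const]
            congr 1; ext ω
            simp [hYdef, sub_eq_add_neg, Real.exp_add]
          rw [h1]
          calc (∫ ω, Real.exp (c * (X u ω - ∫ x, X u x ∂P)) ∂P) * Real.exp (-(c ^ 2 / 8))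
              ≤ Real.exp (c ^ 2 / 8) * Real.exp (-(c ^ 2 / 8)) := by
                apply mul_le_mul_of_nonneg_right
                  (mgf_bound P (X u) (hXmeas u) (hXb u) c hc) (Real.exp_nonneg _)
            _ = 1 := by rw [← Real.exp_add]; simp
        -- B u measurable w.r.t. G n
        have hBuG : Measurable[G n] (B u) := by
          have : u - 1 = n := by omega
          simpa [this] using hBmeas u
        have hBuM : Measurable (B u) := hBuG.mono (hGle n) le_rfl
        have hBub : ∀ ω, 0 ≤ B u ω ∧ B u ω ≤ 1 := by
          intro ω; rcases hB01 u ω with h | h <;> simp [h]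
        -- independence
        have hindep : IndepFun (fun ω => B u ω * Pr ω) Y P := by
          rw [IndepFun_iff_Indep]
          have h1 : MeasurableSpace.comap (fun ω => B u ω * Pr ω) inferInstance ≤ G n :=
            Measurable.comap_le (hBuG.mul hPrmG)
          have h2 : MeasurableSpace.comap Y inferInstance
              ≤ MeasurableSpace.comap (X u) inferInstance := by
            have : Y = (fun x : ℝ => Real.exp (c * (x - ∫ x, X u x ∂P) - c ^ 2 / 8)) ∘ X u := rfl
            rw [this, ← MeasurableSpace.comap_comp]
            apply MeasurableSpace.comap_mono
            exact Measurable.comap_le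
              (Real.measurable_exp.comp (((measurable_id.sub measurable_const).const_mul c).sub
                measurable_const))
          have hmain := hind u (by omega)
          have : u - 1 = n := by omega
          rw [this] at hmain
          exact indep_of_indep_of_le_right (indep_of_indep_of_le_left hmain h1) h2
        -- integrabilities
        have int1 : Integrable (fun ω => (1 - B u ω) * Pr ω) P := by
          refine intb _ C ((measurable_const.sub hBuM).mul hPrm) fun ω => ?_
          have h1 : 0 ≤ (1 - B u ω) * Pr ω := by
            apply mul_nonneg _ (hPrnn ω); linarith [(hBub ω).2]
          rw [abs_of_nonneg h1]
          calc (1 - B u ω) * Pr ω ≤ 1 * Pr ω := by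
                apply mul_le_mul_of_nonneg_right _ (hPrnn ω); linarith [(hBub ω).1]
            _ = Pr ω := one_mul _
            _ ≤ C := hPrub ω
        have int2 : Integrable (fun ω => B u ω * Pr ω) P := by
          refine intb _ C (hBuM.mul hPrm) fun ω => ?_
          have h1 : 0 ≤ B u ω * Pr ω := mul_nonneg (hBub ω).1 (hPrnn ω)
          rw [abs_of_nonneg h1]
          calc B u ω * Pr ω ≤ 1 * Pr ω :=
                mul_le_mul_of_nonneg_right (hBub ω).2 (hPrnn ω)
            _ = Pr ω := one_mul _
            _ ≤ C := hPrub ω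
        have int3 : Integrable (fun ω => B u ω * Pr ω * Y ω) P := by
          refine intb _ (C * Real.exp c) ((hBuM.mul hPrm).mul hYm) fun ω => ?_
          have h1 : 0 ≤ B u ω * Pr ω * Y ω :=
            mul_nonneg (mul_nonneg (hBub ω).1 (hPrnn ω)) (hYb ω).1
          rw [abs_of_nonneg h1]
          have hBP : B u ω * Pr ω ≤ C := by
            calc B u ω * Pr ω ≤ 1 * Pr ω :=
                  mul_le_mul_of_nonneg_right (hBub ω).2 (hPrnn ω)
              _ = Pr ω := one_mul _
              _ ≤ C := hPrub ω
          exact mul_le_mul hBP (hYb ω).2 (hYb ω).1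
            (le_trans (hPrnn ω) (hPrub ω))
        -- the computation
        have hsplit : ∀ ω, (∏ t ∈ Finset.Icc lo (n + 1), g t ω)
            = (1 - B u ω) * Pr ω + B u ω * Pr ω * Y ω := by
          intro ω
          rw [hins, Finset.prod_insert hnotmem]
          have : g u ω = 1 - B u ω + B u ω * Y ω := rfl
          rw [this]; ring
        calc ∫ ω, ∏ t ∈ Finset.Icc lo (n + 1), g t ω ∂P
            = ∫ ω, ((1 - B u ω) * Pr ω + B u ω * Pr ω * Y ω) ∂P := by
              apply integral_congr_ae
              exact Filter.Eventually.of_forall hsplit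
          _ = (∫ ω, (1 - B u ω) * Pr ω ∂P) + ∫ ω, B u ω * Pr ω * Y ω ∂P :=
              integral_add int1 int3
          _ = (∫ ω, (1 - B u ω) * Pr ω ∂P)
              + (∫ ω, B u ω * Pr ω ∂P) * ∫ ω, Y ω ∂P := by
              have hmul : ∫ ω, B u ω * Pr ω * Y ω ∂P
                  = (∫ ω, B u ω * Pr ω ∂P) * ∫ ω, Y ω ∂P := by
                have h0 : (∫ ω, B u ω * Pr ω * Y ω ∂P)
                    = integral P ((fun ω => B u ω * Pr ω) * Y) := rfl
                rw [h0, hindep.integral_mul_eq_mul_integral int2.aestronglyMeasurable hYint.aestronglyMeasurable]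
              rw [hmul]
          _ ≤ (∫ ω, (1 - B u ω) * Pr ω ∂P) + (∫ ω, B u ω * Pr ω ∂P) * 1 := by
              apply add_le_add_right
              apply mul_le_mul_of_nonneg_left hYint1
              exact integral_nonneg fun ω => mul_nonneg (hBub ω).1 (hPrnn ω)
          _ = ∫ ω, ((1 - B u ω) * Pr ω + B u ω * Pr ω) ∂P := by
              rw [mul_one, ← integral_add int1 int2]
          _ = ∫ ω, Pr ω ∂P := by
              apply integral_congr_ae
              exact Filter.Eventually.of_forall fun ω => by ring
          _ ≤ 1 := ih
      · rw [Finset.Icc_eq_empty hlon]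
        simp

lemma natural_indep {Ω : Type*} {mΩ : MeasurableSpace Ω} (P : Measure Ω) [IsProbabilityMeasure P]
    (Z Z' : ℕ → Ω → ℝ)
    (hpm : ∀ t, StronglyMeasurable (fun ω => (Z t ω, Z' t ω)))
    (hindep : iIndepFun
      (fun p : Bool × ℕ => if p.1 then Z' p.2 else Z p.2) P)
    (n t : ℕ) (hnt : n < t) (b : Bool) :
    Indep ((MeasureTheory.Filtration.natural _ hpm) n)
      (MeasurableSpace.comap (if b then Z' t else Z t) inferInstance) P := by
  have hmZ : ∀ i, Measurable (Z i) := fun i => measurable_fst.comp (hpm i).measurable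
  have hmZ' : ∀ i, Measurable (Z' i) := fun i => measurable_snd.comp (hpm i).measurable
  set m : Bool × ℕ → MeasurableSpace Ω :=
    fun p => MeasurableSpace.comap (if p.1 then Z' p.2 else Z p.2) inferInstance with hmdef
  have hiI : iIndep m P := hindep.iIndep
  have h_le : ∀ p, m p ≤ mΩ := by
    rintro ⟨b', i⟩
    cases b' <;> simp only [hmdef, Bool.false_eq_true, if_true, if_false] <;>
      [exact Measurable.comap_le (hmZ i); exact Measurable.comap_le (hmZ' i)]
  set S : Set (Bool × ℕ) := {p | p.2 ≤ n} with hSdef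
  set T : Set (Bool × ℕ) := {(b, t)} with hTdef
  have hST : Disjoint S T := by
    rw [Set.disjoint_singleton_right]
    simp only [hSdef, Set.mem_setOf_eq]
    omega
  have key := indep_iSup_of_disjoint h_le hiI hST
  have hT : (⨆ p ∈ T, m p) = m (b, t) := by
    simp [hTdef]
  rw [hT] at key
  have hF : ((MeasureTheory.Filtration.natural
        (fun t ω => (Z t ω, Z' t ω)) hpm) n : MeasurableSpace Ω)
      = ⨆ j, ⨆ _ : j ≤ n, MeasurableSpace.comap (fun ω => (Z j ω, Z' j ω)) inferInstance := rfl
  have h1 : ((MeasureTheory.Filtration.natural (fun t ω => (Z t ω, Z' t ω)) hpm) n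
        : MeasurableSpace Ω) ≤ ⨆ p ∈ S, m p := by
    rw [hF]
    refine iSup₂_le fun j hj => ?_
    have hZj : Measurable[m (false, j) ⊔ m (true, j)] (Z j) := by
      have : Measurable[m (false, j)] (Z j) := by
        exact Measurable.of_comap_le le_rfl
      exact this.mono le_sup_left le_rfl
    have hZ'j : Measurable[m (false, j) ⊔ m (true, j)] (Z' j) := by
      have : Measurable[m (true, j)] (Z' j) := by
        exact Measurable.of_comap_le le_rfl
      exact this.mono le_sup_right le_rfl
    have hpair : Measurable[m (false, j) ⊔ m (true, j)] (fun ω => (Z j ω, Z' j ω)) :=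
      hZj.prodMk hZ'j
    refine le_trans (Measurable.comap_le hpair) ?_
    refine sup_le ?_ ?_ <;> exact le_biSup m (by simp [hSdef]; omega)
  exact indep_of_indep_of_le_left key h1

lemma dev_bound {Ω : Type*} {mΩ : MeasurableSpace Ω} (P : Measure Ω) [IsProbabilityMeasure P]
    (G : ℕ → MeasurableSpace Ω) (hGle : ∀ i, G i ≤ mΩ) (hGmono : Monotone G)
    (B X : ℕ → Ω → ℝ)
    (hB01 : ∀ t ω, B t ω = 0 ∨ B t ω = 1)
    (hBmeas : ∀ t, Measurable[G (t - 1)] (B t))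
    (hXmeas : ∀ t, Measurable (X t))
    (hXmeasG : ∀ t, Measurable[G t] (X t))
    (hXb : ∀ t ω, X t ω ∈ Set.Icc (0 : ℝ) 1)
    (hind : ∀ t, 1 ≤ t → Indep (G (t - 1)) (MeasurableSpace.comap (X t) inferInstance) P)
    (ε Δ : ℝ) (hε : 0 < ε) (hΔ : 0 < Δ) (s n τ : ℕ) (hs : 1 ≤ s) :
    ∫⁻ ω, (if ε * s ≤ ∑ t ∈ Finset.Icc (n - τ) n, B t ω ∧
        Δ / 2 * ∑ t ∈ Finset.Icc (n - τ) n, B t ω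
          ≤ ∑ t ∈ Finset.Icc (n - τ) n, B t ω * (X t ω - ∫ x, X t x ∂P)
      then (1 : ℝ≥0∞) else 0) ∂P
      ≤ ENNReal.ofReal (Real.exp (2 * Δ) * Real.exp (-(ε * Δ ^ 2 / 2 * s))) := by
  classical
  set μ : ℕ → ℝ := fun t => ∫ x, X t x ∂P with hμdef
  have hμb : ∀ t, 0 ≤ μ t ∧ μ t ≤ 1 := by
    intro t
    constructor
    · exact integral_nonneg fun ω => (hXb t ω).1
    · have : ∫ x, X t x ∂P ≤ ∫ _x, (1 : ℝ) ∂P :=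
        integral_mono ((integrable_const (1:ℝ)).mono' (hXmeas t).aestronglyMeasurable
          (Filter.Eventually.of_forall fun ω => by
            rw [Real.norm_eq_abs, abs_of_nonneg (hXb t ω).1]; exact (hXb t ω).2))
          (integrable_const 1) fun ω => (hXb t ω).2
      simpa using this
  set c : ℝ := 2 * Δ with hcdef
  have hc : 0 ≤ c := by positivity
  set lo : ℕ := max (n - τ) 1 with hlodef
  set g : ℕ → Ω → ℝ := fun t ω =>
    1 - B t ω + B t ω * Real.exp (c * (X t ω - μ t) - c ^ 2 / 8) with hgdef
  set W : Ω → ℝ := fun ω => ∏ t ∈ Finset.Icc lo n, g t ω with hWdef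
  have hWint1 : ∫ ω, W ω ∂P ≤ 1 :=
    super_bound P G hGle hGmono B X hB01 hBmeas hXmeas hXmeasG hXb hind c hc lo
      (le_max_right _ _) n
  -- g as an exponential
  have hgexp : ∀ t ω, g t ω = Real.exp (B t ω * (c * (X t ω - μ t) - c ^ 2 / 8)) := by
    intro t ω
    rcases hB01 t ω with h | h <;> simp [hgdef, h]
  have hWexp : ∀ ω, W ω
      = Real.exp (∑ t ∈ Finset.Icc lo n, B t ω * (c * (X t ω - μ t) - c ^ 2 / 8)) := by
    intro ω
    rw [hWdef, Real.exp_sum]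
    exact Finset.prod_congr rfl fun t _ => hgexp t ω
  -- measurability and boundedness of W
  have hBM : ∀ t, Measurable (B t) := fun t => (hBmeas t).mono (hGle _) le_rfl
  have hWm : Measurable W := by
    apply Finset.measurable_prod
    intro t _
    exact (measurable_const.sub (hBM t)).add
      ((hBM t).mul (Real.measurable_exp.comp
        ((((hXmeas t).sub measurable_const).const_mul c).sub measurable_const)))
  have hgb : ∀ t ω, 0 ≤ g t ω ∧ g t ω ≤ Real.exp c := by
    intro t ω
    have hexp : Real.exp (c * (X t ω - μ t) - c ^ 2 / 8) ≤ Real.exp c := by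
      apply Real.exp_le_exp.2
      have h1 : X t ω - μ t ≤ 1 := by linarith [(hXb t ω).2, (hμb t).1]
      nlinarith [sq_nonneg c]
    have he1 : (1:ℝ) ≤ Real.exp c := by
      rw [show (1:ℝ) = Real.exp 0 by simp]; exact Real.exp_le_exp.2 hc
    rcases hB01 t ω with h | h <;> simp only [hgdef, h]
    · constructor <;> norm_num
      linarith
    · constructor <;> norm_num
      · positivity
      · simpa using hexp
  have hWnn : ∀ ω, 0 ≤ W ω := fun ω => Finset.prod_nonneg fun t _ => (hgb t ω).1
  have hWub : ∀ ω, W ω ≤ Real.exp c ^ (n + 1) := by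
    intro ω
    have he1 : (1:ℝ) ≤ Real.exp c := by
      rw [show (1:ℝ) = Real.exp 0 by simp]; exact Real.exp_le_exp.2 hc
    calc W ω ≤ ∏ _t ∈ Finset.Icc lo n, Real.exp c :=
          Finset.prod_le_prod (fun t _ => (hgb t ω).1) (fun t _ => (hgb t ω).2)
      _ = Real.exp c ^ (Finset.Icc lo n).card := by rw [Finset.prod_const]
      _ ≤ Real.exp c ^ (n + 1) := by
          apply pow_le_pow_right₀ he1
          rw [Nat.card_Icc]; omega
  have hWint : Integrable W P := by
    refine (integrable_const (Real.exp c ^ (n + 1))).mono' hWm.aestronglyMeasurable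
      (Filter.Eventually.of_forall fun ω => ?_)
    rw [Real.norm_eq_abs, abs_of_nonneg (hWnn ω)]
    exact hWub ω
  set a : ℝ := ε * Δ ^ 2 / 2 with hadef
  set cst : ℝ := Real.exp (2 * Δ) * Real.exp (-(a * s)) with hcstdef
  have hcstnn : 0 ≤ cst := by positivity
  -- pointwise bound
  have hpt : ∀ ω, (if ε * s ≤ ∑ t ∈ Finset.Icc (n - τ) n, B t ω ∧
        Δ / 2 * ∑ t ∈ Finset.Icc (n - τ) n, B t ω
          ≤ ∑ t ∈ Finset.Icc (n - τ) n, B t ω * (X t ω - μ t)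
      then (1 : ℝ≥0∞) else 0) ≤ ENNReal.ofReal (cst * W ω) := by
    intro ω
    by_cases hA : ε * s ≤ ∑ t ∈ Finset.Icc (n - τ) n, B t ω ∧
        Δ / 2 * ∑ t ∈ Finset.Icc (n - τ) n, B t ω
          ≤ ∑ t ∈ Finset.Icc (n - τ) n, B t ω * (X t ω - μ t)
    · rw [if_pos hA]
      -- show 1 ≤ cst * W ω
      set V : ℝ := ∑ t ∈ Finset.Icc (n - τ) n, B t ω with hVdef
      set M : ℝ := ∑ t ∈ Finset.Icc (n - τ) n, B t ω * (X t ω - μ t) with hMdef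
      have hsub : Finset.Icc lo n ⊆ Finset.Icc (n - τ) n := by
        intro x hx
        simp only [Finset.mem_Icc] at hx ⊢
        omega
      have hdiff : Finset.Icc (n - τ) n \ Finset.Icc lo n ⊆ {0} := by
        intro x hx
        simp only [Finset.mem_sdiff, Finset.mem_Icc, Finset.mem_singleton] at hx ⊢
        omega
      set V₁ : ℝ := ∑ t ∈ Finset.Icc lo n, B t ω with hV1def
      set M₁ : ℝ := ∑ t ∈ Finset.Icc lo n, B t ω * (X t ω - μ t) with hM1def
      have hB01' : ∀ t, 0 ≤ B t ω ∧ B t ω ≤ 1 := by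
        intro t; rcases hB01 t ω with h | h <;> simp [h]
      have hV1le : V₁ ≤ V := by
        apply Finset.sum_le_sum_of_subset_of_nonneg hsub
        intro t _ _; exact (hB01' t).1
      have hM1ge : M - 1 ≤ M₁ := by
        have hsplitsum : (∑ t ∈ Finset.Icc (n - τ) n \ Finset.Icc lo n,
            B t ω * (X t ω - μ t)) + M₁ = M := Finset.sum_sdiff hsub
        have hle1 : ∑ t ∈ Finset.Icc (n - τ) n \ Finset.Icc lo n,
            B t ω * (X t ω - μ t) ≤ 1 := by
          calc ∑ t ∈ Finset.Icc (n - τ) n \ Finset.Icc lo n, B t ω * (X t ω - μ t)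
              ≤ ∑ _t ∈ Finset.Icc (n - τ) n \ Finset.Icc lo n, (1:ℝ) := by
                apply Finset.sum_le_sum
                intro t _
                rcases hB01 t ω with h | h
                · simp [h]
                · simp only [h, one_mul]
                  linarith [(hXb t ω).2, (hμb t).1]
            _ = (Finset.Icc (n - τ) n \ Finset.Icc lo n).card := by
                rw [Finset.sum_const]; simp
            _ ≤ ({0} : Finset ℕ).card := by
                exact_mod_cast Nat.cast_le.2 (Finset.card_le_card hdiff)
            _ = 1 := by simp
        linarith
      have hWlow : Real.exp (a * s - 2 * Δ) ≤ W ω := by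
        rw [hWexp ω]
        apply Real.exp_le_exp.2
        have hTeq : ∑ t ∈ Finset.Icc lo n, B t ω * (c * (X t ω - μ t) - c ^ 2 / 8)
            = c * M₁ - c ^ 2 / 8 * V₁ := by
          rw [hM1def, hV1def, Finset.mul_sum, Finset.mul_sum, ← Finset.sum_sub_distrib]
          exact Finset.sum_congr rfl fun t _ => by ring
        rw [hTeq]
        have hcsq : c ^ 2 / 8 = Δ ^ 2 / 2 := by rw [hcdef]; ring
        have h1 : Δ / 2 * V ≤ M := hA.2
        have h2 : ε * s ≤ V := hA.1
        have key : a * s - 2 * Δ ≤ c * (M - 1) - Δ ^ 2 / 2 * V := by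
          have : Δ ^ 2 / 2 * (ε * s) ≤ Δ ^ 2 / 2 * V := by nlinarith [sq_nonneg Δ]
          rw [hcdef, hadef]
          nlinarith [sq_nonneg Δ]
        calc a * s - 2 * Δ ≤ c * (M - 1) - Δ ^ 2 / 2 * V := key
          _ ≤ c * M₁ - Δ ^ 2 / 2 * V₁ := by
              have h3 : c * (M - 1) ≤ c * M₁ := mul_le_mul_of_nonneg_left hM1ge hc
              have h4 : Δ ^ 2 / 2 * V₁ ≤ Δ ^ 2 / 2 * V :=
                mul_le_mul_of_nonneg_left hV1le (by positivity)
              linarith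
          _ = c * M₁ - c ^ 2 / 8 * V₁ := by rw [hcsq]
      have : (1:ℝ) ≤ cst * W ω := by
        have h5 : cst * Real.exp (a * s - 2 * Δ) ≤ cst * W ω :=
          mul_le_mul_of_nonneg_left hWlow hcstnn
        have h6 : cst * Real.exp (a * s - 2 * Δ) = 1 := by
          rw [hcstdef, mul_assoc, ← Real.exp_add, ← Real.exp_add]
          rw [show 2 * Δ + (-(a * (s:ℝ)) + (a * s - 2 * Δ)) = 0 by ring]
          exact Real.exp_zero
        linarith
      calc (1 : ℝ≥0∞) = ENNReal.ofReal 1 := by simp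
        _ ≤ ENNReal.ofReal (cst * W ω) := ENNReal.ofReal_le_ofReal this
    · rw [if_neg hA]
      exact zero_le
  calc ∫⁻ ω, (if ε * s ≤ ∑ t ∈ Finset.Icc (n - τ) n, B t ω ∧
        Δ / 2 * ∑ t ∈ Finset.Icc (n - τ) n, B t ω
          ≤ ∑ t ∈ Finset.Icc (n - τ) n, B t ω * (X t ω - μ t)
      then (1 : ℝ≥0∞) else 0) ∂P
      ≤ ∫⁻ ω, ENNReal.ofReal (cst * W ω) ∂P := lintegral_mono hpt
    _ = ENNReal.ofReal (∫ ω, cst * W ω ∂P) := by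
        rw [← ofReal_integral_eq_lintegral_ofReal (hWint.const_mul cst)
          (Filter.Eventually.of_forall fun ω => mul_nonneg hcstnn (hWnn ω))]
    _ ≤ ENNReal.ofReal cst := by
        apply ENNReal.ofReal_le_ofReal
        rw [integral_const_mul]
        calc cst * ∫ ω, W ω ∂P ≤ cst * 1 := mul_le_mul_of_nonneg_left hWint1 hcstnn
          _ = cst := mul_one _
    _ = ENNReal.ofReal (Real.exp (2 * Δ) * Real.exp (-(ε * Δ ^ 2 / 2 * s))) := rfl

/-- Sum of truncated geometric-type terms. -/
lemma sum_min_bound (K a : ℝ) (hK : 1 ≤ K) (ha : 0 < a) (S₀ : ℕ) :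
    ∑ s ∈ Finset.Icc 1 S₀, min 1 (K * Real.exp (-(a * s)))
      ≤ Real.log K / a + 1 / a + 1 := by
  classical
  have hlogK : 0 ≤ Real.log K := Real.log_nonneg hK
  set N : ℕ := Nat.floor (Real.log K / a) with hNdef
  have hNle : (N : ℝ) ≤ Real.log K / a := Nat.floor_le (by positivity)
  have hNlt : Real.log K / a < N + 1 := Nat.lt_floor_add_one _
  set r : ℝ := Real.exp (-a) with hrdef
  have hr0 : 0 < r := Real.exp_pos _
  have hr1 : r < 1 := by
    rw [hrdef, Real.exp_lt_one_iff]; linarith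
  have hrpow : ∀ s : ℕ, Real.exp (-(a * s)) = r ^ s := by
    intro s
    rw [hrdef, ← Real.exp_nat_mul]
    congr 1; ring
  -- pointwise bound by an if-then-else
  have hpt : ∀ s : ℕ, min 1 (K * Real.exp (-(a * s)))
      ≤ if s ≤ N then 1 else K * r ^ s := by
    intro s
    by_cases h : s ≤ N
    · rw [if_pos h]; exact min_le_left _ _
    · rw [if_neg h, hrpow]; exact min_le_right _ _
  calc ∑ s ∈ Finset.Icc 1 S₀, min 1 (K * Real.exp (-(a * s)))
      ≤ ∑ s ∈ Finset.Icc 1 S₀, (if s ≤ N then 1 else K * r ^ s) :=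
        Finset.sum_le_sum fun s _ => hpt s
    _ = (∑ s ∈ (Finset.Icc 1 S₀).filter (fun s => s ≤ N), (1:ℝ))
        + ∑ s ∈ (Finset.Icc 1 S₀).filter (fun s => ¬ s ≤ N), K * r ^ s := by
        rw [← Finset.sum_filter_add_sum_filter_not (Finset.Icc 1 S₀) (fun s => s ≤ N)]
        congr 1
        · exact Finset.sum_congr rfl fun s hs => if_pos (Finset.mem_filter.1 hs).2
        · exact Finset.sum_congr rfl fun s hs => if_neg (Finset.mem_filter.1 hs).2
    _ ≤ (N : ℝ) + ∑ s ∈ (Finset.Icc 1 S₀).filter (fun s => ¬ s ≤ N), K * r ^ s := by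
        apply add_le_add_left
        rw [Finset.sum_const]
        simp only [nsmul_eq_mul, mul_one]
        have : (Finset.Icc 1 S₀).filter (fun s => s ≤ N) ⊆ Finset.Icc 1 N := by
          intro x hx
          simp only [Finset.mem_filter, Finset.mem_Icc] at hx ⊢
          exact ⟨hx.1.1, hx.2⟩
        have hcard : ((Finset.Icc 1 S₀).filter (fun s => s ≤ N)).card ≤ N := by
          calc ((Finset.Icc 1 S₀).filter (fun s => s ≤ N)).card
              ≤ (Finset.Icc 1 N).card := Finset.card_le_card this
            _ = N := by rw [Nat.card_Icc]; omega
        exact_mod_cast Nat.cast_le.2 hcard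
    _ ≤ (N : ℝ) + ∑ s ∈ Finset.Icc (N+1) S₀, K * r ^ s := by
        apply add_le_add_right
        apply Finset.sum_le_sum_of_subset_of_nonneg
        · intro x hx
          simp only [Finset.mem_filter, Finset.mem_Icc, not_le] at hx ⊢
          omega
        · intro t _ _
          positivity
    _ ≤ (N : ℝ) + (1 / a + 1) := by
        apply add_le_add_right
        -- geometric tail
        have hre : ∀ s ∈ Finset.Icc (N+1) S₀, K * r ^ s = (K * r ^ (N+1)) * r ^ (s - (N+1)) := by
          intro s hs
          have h1 : N + 1 ≤ s := (Finset.mem_Icc.1 hs).1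
          rw [mul_assoc, ← pow_add]
          congr 2
          omega
        rw [Finset.sum_congr rfl hre]
        have hKr : K * r ^ (N + 1) ≤ 1 := by
          have h1 : Real.log K ≤ a * (N + 1) := by
            rw [div_lt_iff₀ ha] at hNlt
            linarith [hNlt]
          have h2 : K ≤ Real.exp (a * (N + 1)) := by
            calc K = Real.exp (Real.log K) := (Real.exp_log (by linarith)).symm
              _ ≤ Real.exp (a * (N + 1)) := Real.exp_le_exp.2 h1
          have h3 : r ^ (N + 1) = Real.exp (-(a * (N + 1))) := by
            rw [← hrpow (N+1)]
            push_cast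
            ring_nf
          rw [h3]
          calc K * Real.exp (-(a * (N + 1)))
              ≤ Real.exp (a * (N + 1)) * Real.exp (-(a * (N + 1))) := by
                apply mul_le_mul_of_nonneg_right h2 (Real.exp_nonneg _)
            _ = 1 := by rw [← Real.exp_add]; simp
        have hgeom : ∑ s ∈ Finset.Icc (N+1) S₀, r ^ (s - (N+1)) ≤ 1 / (1 - r) := by
          have h1 : ∑ s ∈ Finset.Icc (N+1) S₀, r ^ (s - (N+1))
              ≤ ∑ j ∈ Finset.range (S₀ + 1), r ^ j := by
            have himg : ∑ s ∈ Finset.Icc (N+1) S₀, r ^ (s - (N+1))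
                = ∑ j ∈ (Finset.Icc (N+1) S₀).image (fun s => s - (N+1)), r ^ j := by
              rw [Finset.sum_image]
              intro x hx y hy h
              simp only [Finset.coe_Icc, Set.mem_Icc, Finset.mem_Icc] at hx hy
              simp only at h
              omega
            rw [himg]
            apply Finset.sum_le_sum_of_subset_of_nonneg
            · intro x hx
              simp only [Finset.mem_image, Finset.mem_Icc] at hx
              obtain ⟨y, hy, rfl⟩ := hx
              simp only [Finset.mem_range]
              omega
            · intro t _ _; positivity
          have h2 : ∑ j ∈ Finset.range (S₀ + 1), r ^ j ≤ 1 / (1 - r) := by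
            rw [geom_sum_eq (by linarith : r ≠ 1)]
            rw [show (r ^ (S₀ + 1) - 1) / (r - 1) = (1 - r ^ (S₀ + 1)) / (1 - r) by
              rw [div_eq_div_iff (by linarith) (by linarith)]; ring]
            apply div_le_div_of_nonneg_right _ (by linarith)
            · have : 0 ≤ r ^ (S₀ + 1) := by positivity
              linarith
          linarith
        have hfinal : ∑ s ∈ Finset.Icc (N+1) S₀, (K * r ^ (N+1)) * r ^ (s - (N+1))
            ≤ 1 / (1 - r) := by
          rw [← Finset.mul_sum]
          calc (K * r ^ (N+1)) * ∑ s ∈ Finset.Icc (N+1) S₀, r ^ (s - (N+1))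
              ≤ 1 * (1 / (1 - r)) := by
                apply mul_le_mul hKr hgeom (Finset.sum_nonneg fun t _ => by positivity)
                norm_num
            _ = 1 / (1 - r) := one_mul _
        have honeminr : 1 / (1 - r) ≤ 1 / a + 1 := by
          have h1 : r ≤ 1 / (1 + a) := by
            rw [hrdef, Real.exp_neg, inv_eq_one_div]
            exact one_div_le_one_div_of_le (by linarith)
              (by linarith [Real.add_one_le_exp a])
          have h2 : a / (1 + a) ≤ 1 - r := by
            have : 1 - 1 / (1 + a) = a / (1 + a) := by
              field_simp
              ring
            linarith [h1, this]
          have h3 : 0 < a / (1 + a) := by positivity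
          calc 1 / (1 - r) ≤ 1 / (a / (1 + a)) :=
              one_div_le_one_div_of_le h3 h2
            _ = (1 + a) / a := by rw [one_div_div]
            _ = 1 / a + 1 := by field_simp
        linarith
    _ ≤ Real.log K / a + 1 / a + 1 := by linarith

lemma log68 : 1 ≤ Real.log (68 / 25) := by
  rw [Real.le_log_iff_exp_le (by norm_num : (0:ℝ) < 68 / 25)]
  calc Real.exp 1 ≤ 2.7182818286 := le_of_lt Real.exp_one_lt_d9
    _ ≤ 68 / 25 := by norm_num

lemma NLred (τ : ℕ) (h4 : 4 ≤ τ)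
    (hP : (2 * (τ:ℝ) + 2) ^ (τ - 3) * ((68:ℝ) / 25) ^ (3 * τ - 9) ≤ (τ:ℝ) ^ (2 * τ)) :
    ((τ:ℝ) - 3) * (Real.log (2 * ((τ:ℝ) + 1)) + 3 - 2 * Real.log τ) ≤ 6 * Real.log τ := by
  have hτ4 : (4:ℝ) ≤ (τ:ℝ) := by exact_mod_cast h4
  have hτpos : (0:ℝ) < τ := by linarith
  have h2τ : (0:ℝ) < 2 * (τ:ℝ) + 2 := by linarith
  have hLHSpos : (0:ℝ) < (2 * (τ:ℝ) + 2) ^ (τ - 3) * ((68:ℝ) / 25) ^ (3 * τ - 9) := by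
    positivity
  have hlog := Real.log_le_log hLHSpos hP
  rw [Real.log_mul (by positivity) (by positivity), Real.log_pow, Real.log_pow,
    Real.log_pow] at hlog
  have hc1 : ((τ - 3 : ℕ) : ℝ) = (τ:ℝ) - 3 := by
    rw [Nat.cast_sub (by omega)]; norm_num
  have hc2 : ((3 * τ - 9 : ℕ) : ℝ) = 3 * (τ:ℝ) - 9 := by
    rw [Nat.cast_sub (by omega)]; push_cast; ring
  have hc3 : ((2 * τ : ℕ) : ℝ) = 2 * (τ:ℝ) := by push_cast; ring
  rw [hc1, hc2, hc3] at hlog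
  have hL3 : 3 * ((τ:ℝ) - 3) ≤ (3 * (τ:ℝ) - 9) * Real.log (68 / 25) := by
    have h1 : (3 * (τ:ℝ) - 9) * 1 ≤ (3 * (τ:ℝ) - 9) * Real.log (68 / 25) :=
      mul_le_mul_of_nonneg_left log68 (by linarith)
    linarith
  have h2e : 2 * ((τ:ℝ) + 1) = 2 * (τ:ℝ) + 2 := by ring
  rw [h2e]
  nlinarith [hlog, hL3]

lemma NL (τ : ℕ) (h4 : 4 ≤ τ) :
    ((τ:ℝ) - 3) * (Real.log (2 * ((τ:ℝ) + 1)) + 3 - 2 * Real.log τ) ≤ 6 * Real.log τ := by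
  by_cases h42 : 42 ≤ τ
  · have hτ42 : (42:ℝ) ≤ (τ:ℝ) := by exact_mod_cast h42
    have hτpos : (0:ℝ) < τ := by linarith
    have hx : (2 * ((τ:ℝ) + 1)) * (68 / 25) ^ 3 ≤ (τ:ℝ) ^ 2 := by
      nlinarith [mul_le_mul_of_nonneg_left hτ42 (by linarith : (0:ℝ) ≤ (τ:ℝ))]
    have hloge : Real.log (2 * ((τ:ℝ) + 1)) + 3 ≤ 2 * Real.log τ := by
      have h1 : Real.log ((2 * ((τ:ℝ) + 1)) * (68 / 25) ^ 3)
          = Real.log (2 * ((τ:ℝ) + 1)) + Real.log (((68:ℝ) / 25) ^ 3) :=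
        Real.log_mul (by positivity) (by positivity)
      have h1b : Real.log (((68:ℝ) / 25) ^ 3) = (3:ℕ) * Real.log ((68:ℝ) / 25) :=
        by rw [Real.log_pow]
      have h2 : Real.log ((2 * ((τ:ℝ) + 1)) * (68 / 25) ^ 3) ≤ Real.log ((τ:ℝ) ^ 2) :=
        Real.log_le_log (by positivity) hx
      have h2b : Real.log ((τ:ℝ) ^ 2) = (2:ℕ) * Real.log (τ:ℝ) := by rw [Real.log_pow]
      have h3 : 3 * (1:ℝ) ≤ 3 * Real.log (68 / 25) := by linarith [log68]
      rw [h1, h1b] at h2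
      rw [h2b] at h2
      push_cast at h2
      linarith
    have hlogτ : 0 ≤ Real.log τ := Real.log_nonneg (by linarith)
    have hnonpos : Real.log (2 * ((τ:ℝ) + 1)) + 3 - 2 * Real.log τ ≤ 0 := by linarith
    have hτ3 : (0:ℝ) ≤ (τ:ℝ) - 3 := by linarith
    calc ((τ:ℝ) - 3) * (Real.log (2 * ((τ:ℝ) + 1)) + 3 - 2 * Real.log τ)
        ≤ 0 := mul_nonpos_of_nonneg_of_nonpos hτ3 hnonpos
      _ ≤ 6 * Real.log τ := by linarith
  · have h41 : τ ≤ 41 := by omega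
    interval_cases τ <;> exact NLred _ (by norm_num) (by norm_num)

end AuxLemmas

theorem stmt_12 {Ω : Type*} {mΩ : MeasurableSpace Ω} (P : Measure Ω) [IsProbabilityMeasure P]
    (Z Z' : ℕ → Ω → ℝ)
    (hpm : ∀ t, StronglyMeasurable (fun ω => (Z t ω, Z' t ω)))
    (hZb : ∀ t ω, Z t ω ∈ Set.Icc (0 : ℝ) 1) (hZb' : ∀ t ω, Z' t ω ∈ Set.Icc (0 : ℝ) 1)
    (hindep : iIndepFun
      (fun p : Bool × ℕ => if p.1 then Z' p.2 else Z p.2) P)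
    (Bsel Bsel' : ℕ → Ω → ℝ)
    (hB01 : ∀ t ω, Bsel t ω = 0 ∨ Bsel t ω = 1)
    (hB01' : ∀ t ω, Bsel' t ω = 0 ∨ Bsel' t ω = 1)
    (hBm : ∀ t, Measurable[(MeasureTheory.Filtration.natural _ hpm) (t - 1)] (Bsel t))
    (hBm' : ∀ t, Measurable[(MeasureTheory.Filtration.natural _ hpm) (t - 1)] (Bsel' t))
    (n₀ τ : ℕ) (ε Δ : ℝ) (hε : 0 < ε) (hΔ : 0 < Δ)
    (Λ : Ω → Set ℕ) (Λs : ℕ → Ω → Set ℕ)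
    (hsub : ∀ ω, Λ ω ⊆ ⋃ s ∈ Set.Ici 1, Λs s ω)
    (hbig : ∀ s : ℕ, ∀ ω, ∀ n ∈ Λs s ω,
      ε * (s : ℝ) ≤ ∑ t ∈ Finset.Icc (n - τ) n, Bsel t ω)
    (hbig' : ∀ s : ℕ, ∀ ω, ∀ n ∈ Λs s ω,
      ε * (s : ℝ) ≤ ∑ t ∈ Finset.Icc (n - τ) n, Bsel' t ω)
    (hone : ∀ s ω, (Λs s ω ∩ Set.Icc n₀ (n₀ + τ)).Subsingleton)
    (hmeasΛ : ∀ s n,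
      MeasurableSet[(MeasureTheory.Filtration.natural _ hpm) n] {ω | n ∈ Λs s ω})
    -- the (conditional) window means of the two arms are separated by Δ on Λ
    (hgap : ∀ ω, ∀ n ∈ Λ ω,
      (if 0 < ∑ t ∈ Finset.Icc (n - τ) n, Bsel t ω then
        (∑ t ∈ Finset.Icc (n - τ) n, Bsel t ω * (∫ x, Z t x ∂P)) /
          (∑ t ∈ Finset.Icc (n - τ) n, Bsel t ω)
      else 0) ≤
      (if 0 < ∑ t ∈ Finset.Icc (n - τ) n, Bsel' t ω then
        (∑ t ∈ Finset.Icc (n - τ) n, Bsel' t ω * (∫ x, Z' t x ∂P)) /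
          (∑ t ∈ Finset.Icc (n - τ) n, Bsel' t ω)
      else 0) - Δ) :
    ∫⁻ ω, ∑ n ∈ Finset.Icc n₀ (n₀ + τ),
        (if n ∈ Λ ω ∧
            (if 0 < ∑ t ∈ Finset.Icc (n - τ) n, Bsel' t ω then
              (∑ t ∈ Finset.Icc (n - τ) n, Bsel' t ω * Z' t ω) /
                (∑ t ∈ Finset.Icc (n - τ) n, Bsel' t ω)
            else 0) <
            (if 0 < ∑ t ∈ Finset.Icc (n - τ) n, Bsel t ω then
              (∑ t ∈ Finset.Icc (n - τ) n, Bsel t ω * Z t ω) /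
                (∑ t ∈ Finset.Icc (n - τ) n, Bsel t ω)
            else 0)
          then (1 : ℝ≥0∞) else 0) ∂P
      ≤ ENNReal.ofReal (4 * Real.log τ / (ε * Δ ^ 2) + 4) := by
  classical
  -- Notation
  set F := MeasureTheory.Filtration.natural (fun t ω => (Z t ω, Z' t ω)) hpm with hFdef
  set X' : ℕ → Ω → ℝ := fun t ω => 1 - Z' t ω with hX'def
  have hmZ : ∀ i, Measurable (Z i) := fun i => measurable_fst.comp (hpm i).measurable
  have hmZ' : ∀ i, Measurable (Z' i) := fun i => measurable_snd.comp (hpm i).measurable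
  have hmX' : ∀ i, Measurable (X' i) := fun i => measurable_const.sub (hmZ' i)
  have hX'b : ∀ t ω, X' t ω ∈ Set.Icc (0 : ℝ) 1 := by
    intro t ω
    have h := hZb' t ω
    simp only [Set.mem_Icc] at h ⊢
    simp only [hX'def]
    constructor
    · linarith [h.2]
    · linarith [h.1]
  have hGle : ∀ i, (F i : MeasurableSpace Ω) ≤ mΩ := fun i => F.le i
  have hGmono : Monotone (fun i => (F i : MeasurableSpace Ω)) := fun i j h => F.mono h
  -- F-measurability of the arms
  have hcomap_le : ∀ t, MeasurableSpace.comap (fun ω => (Z t ω, Z' t ω)) inferInstance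
      ≤ (F t : MeasurableSpace Ω) := by
    intro t
    have heq : (F t : MeasurableSpace Ω) = ⨆ j, ⨆ _ : j ≤ t,
        MeasurableSpace.comap (fun ω => (Z j ω, Z' j ω)) inferInstance := rfl
    rw [heq]
    exact le_iSup₂ (f := fun j (_ : j ≤ t) =>
      MeasurableSpace.comap (fun ω => (Z j ω, Z' j ω)) inferInstance) t le_rfl
  have hpairm : ∀ t, Measurable[MeasurableSpace.comap (fun ω => (Z t ω, Z' t ω)) inferInstance]
      (fun ω => (Z t ω, Z' t ω)) := fun t => Measurable.of_comap_le le_rfl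
  have hFmeasZ : ∀ t, Measurable[F t] (Z t) := fun t =>
    (measurable_fst.comp (hpairm t)).mono (hcomap_le t) le_rfl
  have hFmeasZ' : ∀ t, Measurable[F t] (Z' t) := fun t =>
    (measurable_snd.comp (hpairm t)).mono (hcomap_le t) le_rfl
  have hFmeasX' : ∀ t, Measurable[F t] (X' t) := fun t =>
    measurable_const.sub (hFmeasZ' t)
  -- independence
  have hindZ : ∀ t, 1 ≤ t →
      Indep (F (t - 1)) (MeasurableSpace.comap (Z t) inferInstance) P := by
    intro t ht
    have h := natural_indep P Z Z' hpm hindep (t - 1) t (by omega) false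
    simpa using h
  have hindX' : ∀ t, 1 ≤ t →
      Indep (F (t - 1)) (MeasurableSpace.comap (X' t) inferInstance) P := by
    intro t ht
    have h := natural_indep P Z Z' hpm hindep (t - 1) t (by omega) true
    simp only [if_true] at h
    have hle : MeasurableSpace.comap (X' t) inferInstance
        ≤ MeasurableSpace.comap (Z' t) inferInstance := by
      have heq : X' t = (fun x : ℝ => 1 - x) ∘ Z' t := rfl
      rw [heq, ← MeasurableSpace.comap_comp]
      exact MeasurableSpace.comap_mono
        (Measurable.comap_le (measurable_const.sub measurable_id))
    exact indep_of_indep_of_le_right h hle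
  -- integrability and means
  have hZint : ∀ t, Integrable (Z t) P := fun t =>
    (integrable_const (1 : ℝ)).mono' (hmZ t).aestronglyMeasurable
      (Filter.Eventually.of_forall fun ω => by
        rw [Real.norm_eq_abs, abs_of_nonneg (hZb t ω).1]; exact (hZb t ω).2)
  have hZ'int : ∀ t, Integrable (Z' t) P := fun t =>
    (integrable_const (1 : ℝ)).mono' (hmZ' t).aestronglyMeasurable
      (Filter.Eventually.of_forall fun ω => by
        rw [Real.norm_eq_abs, abs_of_nonneg (hZb' t ω).1]; exact (hZb' t ω).2)
  have hX'mean : ∀ t, ∫ x, X' t x ∂P = 1 - ∫ x, Z' t x ∂P := by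
    intro t
    rw [hX'def]
    rw [integral_sub (integrable_const 1) (hZ'int t)]
    simp
  have hμZ : ∀ t, 0 ≤ (∫ x, Z t x ∂P) ∧ (∫ x, Z t x ∂P) ≤ 1 := by
    intro t
    constructor
    · exact integral_nonneg fun ω => (hZb t ω).1
    · have : ∫ x, Z t x ∂P ≤ ∫ _x, (1:ℝ) ∂P :=
        integral_mono (hZint t) (integrable_const 1) fun ω => (hZb t ω).2
      simpa using this
  have hμZ' : ∀ t, 0 ≤ (∫ x, Z' t x ∂P) ∧ (∫ x, Z' t x ∂P) ≤ 1 := by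
    intro t
    constructor
    · exact integral_nonneg fun ω => (hZb' t ω).1
    · have : ∫ x, Z' t x ∂P ≤ ∫ _x, (1:ℝ) ∂P :=
        integral_mono (hZ'int t) (integrable_const 1) fun ω => (hZb' t ω).2
      simpa using this
  -- key quantities
  set a : ℝ := ε * Δ ^ 2 / 2 with hadef
  have ha : 0 < a := by positivity
  set S₀ : ℕ := Nat.ceil (((τ : ℝ) + 1) / ε) with hS₀def
  set K : ℝ := 2 * ((τ : ℝ) + 1) * Real.exp (2 * Δ) with hKdef
  have hexp2Δ : (1 : ℝ) ≤ Real.exp (2 * Δ) := by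
    rw [show (1:ℝ) = Real.exp 0 by simp]
    exact Real.exp_le_exp.2 (by positivity)
  have hK1 : 1 ≤ K := by
    have hτ0 : (0:ℝ) ≤ (τ:ℝ) := Nat.cast_nonneg τ
    nlinarith
  -- deviation events
  set A1 : ℕ → ℕ → Ω → Prop := fun n s ω =>
    ε * s ≤ (∑ t ∈ Finset.Icc (n - τ) n, Bsel t ω) ∧
      Δ / 2 * (∑ t ∈ Finset.Icc (n - τ) n, Bsel t ω)
        ≤ ∑ t ∈ Finset.Icc (n - τ) n, Bsel t ω * (Z t ω - ∫ x, Z t x ∂P) with hA1def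
  set A2 : ℕ → ℕ → Ω → Prop := fun n s ω =>
    ε * s ≤ (∑ t ∈ Finset.Icc (n - τ) n, Bsel' t ω) ∧
      Δ / 2 * (∑ t ∈ Finset.Icc (n - τ) n, Bsel' t ω)
        ≤ ∑ t ∈ Finset.Icc (n - τ) n, Bsel' t ω * (X' t ω - ∫ x, X' t x ∂P) with hA2def
  -- window size bound
  have hVub : ∀ n ω, (∑ t ∈ Finset.Icc (n - τ) n, Bsel t ω) ≤ (τ:ℝ) + 1 := by
    intro n ω
    calc (∑ t ∈ Finset.Icc (n - τ) n, Bsel t ω)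
        ≤ ∑ _t ∈ Finset.Icc (n - τ) n, (1:ℝ) := by
          apply Finset.sum_le_sum
          intro t _
          rcases hB01 t ω with h | h <;> simp [h]
      _ = ((Finset.Icc (n - τ) n).card : ℝ) := by rw [Finset.sum_const]; simp
      _ ≤ (τ:ℝ) + 1 := by
          have : (Finset.Icc (n - τ) n).card ≤ τ + 1 := by
            rw [Nat.card_Icc]; omega
          exact_mod_cast this
  -- main pointwise extraction
  have hmain : ∀ ω n, (n ∈ Λ ω ∧
      (if 0 < ∑ t ∈ Finset.Icc (n - τ) n, Bsel' t ω then
        (∑ t ∈ Finset.Icc (n - τ) n, Bsel' t ω * Z' t ω) /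
          (∑ t ∈ Finset.Icc (n - τ) n, Bsel' t ω)
      else 0) <
      (if 0 < ∑ t ∈ Finset.Icc (n - τ) n, Bsel t ω then
        (∑ t ∈ Finset.Icc (n - τ) n, Bsel t ω * Z t ω) /
          (∑ t ∈ Finset.Icc (n - τ) n, Bsel t ω)
      else 0)) →
      ∃ s, 1 ≤ s ∧ s ≤ S₀ ∧ n ∈ Λs s ω ∧ (A1 n s ω ∨ A2 n s ω) := by
    intro ω n hc
    obtain ⟨hΛn, hcross⟩ := hc
    obtain ⟨s, hs1, hmem⟩ : ∃ s, 1 ≤ s ∧ n ∈ Λs s ω := by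
      have h := hsub ω hΛn
      simp only [Set.mem_iUnion] at h
      obtain ⟨s, hs, hmem⟩ := h
      exact ⟨s, hs, hmem⟩
    have hVs : ε * s ≤ ∑ t ∈ Finset.Icc (n - τ) n, Bsel t ω := hbig s ω n hmem
    have hV's : ε * s ≤ ∑ t ∈ Finset.Icc (n - τ) n, Bsel' t ω := hbig' s ω n hmem
    have hs1R : (1:ℝ) ≤ (s:ℝ) := by exact_mod_cast hs1
    have hεs : ε ≤ ε * s := by nlinarith
    have hV0 : 0 < ∑ t ∈ Finset.Icc (n - τ) n, Bsel t ω := by linarith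
    have hV'0 : 0 < ∑ t ∈ Finset.Icc (n - τ) n, Bsel' t ω := by linarith
    have hsS₀ : s ≤ S₀ := by
      have h1 : (s:ℝ) ≤ ((τ:ℝ) + 1) / ε := by
        rw [le_div_iff₀ hε]
        calc (s:ℝ) * ε = ε * s := by ring
          _ ≤ ∑ t ∈ Finset.Icc (n - τ) n, Bsel t ω := hVs
          _ ≤ (τ:ℝ) + 1 := hVub n ω
      have h2 : ((τ:ℝ) + 1) / ε ≤ (S₀ : ℝ) := Nat.le_ceil _
      exact_mod_cast le_trans h1 h2
    refine ⟨s, hs1, hsS₀, hmem, ?_⟩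
    by_contra hAB
    push_neg at hAB
    obtain ⟨hnA1, hnA2⟩ := hAB
    rw [hA1def] at hnA1
    rw [hA2def] at hnA2
    simp only [not_and, not_le] at hnA1 hnA2
    have hM1 : ∑ t ∈ Finset.Icc (n - τ) n, Bsel t ω * (Z t ω - ∫ x, Z t x ∂P)
        < Δ / 2 * (∑ t ∈ Finset.Icc (n - τ) n, Bsel t ω) := hnA1 hVs
    have hM2 : ∑ t ∈ Finset.Icc (n - τ) n, Bsel' t ω * (X' t ω - ∫ x, X' t x ∂P)
        < Δ / 2 * (∑ t ∈ Finset.Icc (n - τ) n, Bsel' t ω) := hnA2 hV's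
    -- decompose the sums
    have hMeq : ∑ t ∈ Finset.Icc (n - τ) n, Bsel t ω * (Z t ω - ∫ x, Z t x ∂P)
        = (∑ t ∈ Finset.Icc (n - τ) n, Bsel t ω * Z t ω)
          - ∑ t ∈ Finset.Icc (n - τ) n, Bsel t ω * (∫ x, Z t x ∂P) := by
      rw [← Finset.sum_sub_distrib]
      exact Finset.sum_congr rfl fun t _ => by ring
    have hM'eq : ∑ t ∈ Finset.Icc (n - τ) n, Bsel' t ω * (X' t ω - ∫ x, X' t x ∂P)
        = (∑ t ∈ Finset.Icc (n - τ) n, Bsel' t ω * (∫ x, Z' t x ∂P))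
          - ∑ t ∈ Finset.Icc (n - τ) n, Bsel' t ω * Z' t ω := by
      rw [← Finset.sum_sub_distrib]
      refine Finset.sum_congr rfl fun t _ => ?_
      rw [hX'mean t]
      simp only [hX'def]
      ring
    rw [hMeq] at hM1
    rw [hM'eq] at hM2
    have hg := hgap ω n hΛn
    rw [if_pos hV0, if_pos hV'0] at hg
    rw [if_pos hV0, if_pos hV'0] at hcross
    -- divide through
    set V : ℝ := ∑ t ∈ Finset.Icc (n - τ) n, Bsel t ω with hVdef
    set V' : ℝ := ∑ t ∈ Finset.Icc (n - τ) n, Bsel' t ω with hV'def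
    have hd1 : (∑ t ∈ Finset.Icc (n - τ) n, Bsel t ω * Z t ω) / V
        - (∑ t ∈ Finset.Icc (n - τ) n, Bsel t ω * (∫ x, Z t x ∂P)) / V < Δ / 2 := by
      rw [div_sub_div_same]
      rw [div_lt_iff₀ hV0]
      calc (∑ t ∈ Finset.Icc (n - τ) n, Bsel t ω * Z t ω)
            - ∑ t ∈ Finset.Icc (n - τ) n, Bsel t ω * (∫ x, Z t x ∂P)
          < Δ / 2 * V := hM1
        _ = Δ / 2 * V := rfl
    have hd2 : (∑ t ∈ Finset.Icc (n - τ) n, Bsel' t ω * (∫ x, Z' t x ∂P)) / V'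
        - (∑ t ∈ Finset.Icc (n - τ) n, Bsel' t ω * Z' t ω) / V' < Δ / 2 := by
      rw [div_sub_div_same]
      rw [div_lt_iff₀ hV'0]
      exact hM2
    linarith
  -- the per-scale counting functions
  set T : ℕ → Ω → ℝ≥0∞ := fun s ω => ∑ n ∈ Finset.Icc n₀ (n₀ + τ),
    (if n ∈ Λs s ω ∧ (A1 n s ω ∨ A2 n s ω) then (1:ℝ≥0∞) else 0) with hTdef
  -- measurability of everything needed
  have hBMm : ∀ t, Measurable (Bsel t) := fun t => (hBm t).mono (hGle _) le_rfl
  have hBMm' : ∀ t, Measurable (Bsel' t) := fun t => (hBm' t).mono (hGle _) le_rfl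
  have hVm : ∀ n, Measurable (fun ω => ∑ t ∈ Finset.Icc (n - τ) n, Bsel t ω) := by
    intro n
    exact Finset.measurable_sum _ fun t _ => hBMm t
  have hV'm : ∀ n, Measurable (fun ω => ∑ t ∈ Finset.Icc (n - τ) n, Bsel' t ω) := by
    intro n
    exact Finset.measurable_sum _ fun t _ => hBMm' t
  have hMm : ∀ n, Measurable (fun ω => ∑ t ∈ Finset.Icc (n - τ) n,
      Bsel t ω * (Z t ω - ∫ x, Z t x ∂P)) := by
    intro n
    exact Finset.measurable_sum _ fun t _ =>
      (hBMm t).mul ((hmZ t).sub measurable_const)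
  have hM'm : ∀ n, Measurable (fun ω => ∑ t ∈ Finset.Icc (n - τ) n,
      Bsel' t ω * (X' t ω - ∫ x, X' t x ∂P)) := by
    intro n
    exact Finset.measurable_sum _ fun t _ =>
      (hBMm' t).mul ((hmX' t).sub measurable_const)
  have hA1set : ∀ n s, MeasurableSet {ω | A1 n s ω} := by
    intro n s
    rw [hA1def]
    simp only [Set.setOf_and]
    exact (measurableSet_le measurable_const (hVm n)).inter
      (measurableSet_le (measurable_const.mul (hVm n)) (hMm n))
  have hA2set : ∀ n s, MeasurableSet {ω | A2 n s ω} := by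
    intro n s
    rw [hA2def]
    simp only [Set.setOf_and]
    exact (measurableSet_le measurable_const (hV'm n)).inter
      (measurableSet_le (measurable_const.mul (hV'm n)) (hM'm n))
  have hΛset : ∀ s n, MeasurableSet {ω | n ∈ Λs s ω} := fun s n =>
    (hGle n) _ (hmeasΛ s n)
  have hTmeas : ∀ s, Measurable (T s) := by
    intro s
    rw [hTdef]
    apply Finset.measurable_sum
    intro n _
    have hset : MeasurableSet {ω | n ∈ Λs s ω ∧ (A1 n s ω ∨ A2 n s ω)} := by
      simp only [Set.setOf_and, Set.setOf_or]
      exact (hΛset s n).inter ((hA1set n s).union (hA2set n s))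
    exact Measurable.ite hset measurable_const measurable_const
  -- step 1 : pointwise domination
  have step1 : ∀ ω, (∑ n ∈ Finset.Icc n₀ (n₀ + τ),
      (if n ∈ Λ ω ∧
          (if 0 < ∑ t ∈ Finset.Icc (n - τ) n, Bsel' t ω then
            (∑ t ∈ Finset.Icc (n - τ) n, Bsel' t ω * Z' t ω) /
              (∑ t ∈ Finset.Icc (n - τ) n, Bsel' t ω)
          else 0) <
          (if 0 < ∑ t ∈ Finset.Icc (n - τ) n, Bsel t ω then
            (∑ t ∈ Finset.Icc (n - τ) n, Bsel t ω * Z t ω) /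
              (∑ t ∈ Finset.Icc (n - τ) n, Bsel t ω)
          else 0)
        then (1 : ℝ≥0∞) else 0))
      ≤ ∑ s ∈ Finset.Icc 1 S₀, T s ω := by
    intro ω
    have hswap : ∑ s ∈ Finset.Icc 1 S₀, T s ω
        = ∑ n ∈ Finset.Icc n₀ (n₀ + τ), ∑ s ∈ Finset.Icc 1 S₀,
            (if n ∈ Λs s ω ∧ (A1 n s ω ∨ A2 n s ω) then (1:ℝ≥0∞) else 0) := by
      rw [hTdef]
      exact Finset.sum_comm
    rw [hswap]
    apply Finset.sum_le_sum
    intro n _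
    by_cases hc : n ∈ Λ ω ∧
        (if 0 < ∑ t ∈ Finset.Icc (n - τ) n, Bsel' t ω then
          (∑ t ∈ Finset.Icc (n - τ) n, Bsel' t ω * Z' t ω) /
            (∑ t ∈ Finset.Icc (n - τ) n, Bsel' t ω)
        else 0) <
        (if 0 < ∑ t ∈ Finset.Icc (n - τ) n, Bsel t ω then
          (∑ t ∈ Finset.Icc (n - τ) n, Bsel t ω * Z t ω) /
            (∑ t ∈ Finset.Icc (n - τ) n, Bsel t ω)
        else 0)
    · rw [if_pos hc]
      obtain ⟨s, hs1, hs2, hmem, hA⟩ := hmain ω n hc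
      have hterm : (1:ℝ≥0∞) = (if n ∈ Λs s ω ∧ (A1 n s ω ∨ A2 n s ω)
          then (1:ℝ≥0∞) else 0) := by rw [if_pos ⟨hmem, hA⟩]
      refine le_trans (le_of_eq hterm) ?_
      exact Finset.single_le_sum (f := fun s =>
          (if n ∈ Λs s ω ∧ (A1 n s ω ∨ A2 n s ω) then (1:ℝ≥0∞) else 0))
        (fun i _ => zero_le) (Finset.mem_Icc.2 ⟨hs1, hs2⟩)
    · rw [if_neg hc]
      exact zero_le
  -- name the LHS
  set I : ℝ≥0∞ := ∫⁻ ω, ∑ n ∈ Finset.Icc n₀ (n₀ + τ),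
      (if n ∈ Λ ω ∧
          (if 0 < ∑ t ∈ Finset.Icc (n - τ) n, Bsel' t ω then
            (∑ t ∈ Finset.Icc (n - τ) n, Bsel' t ω * Z' t ω) /
              (∑ t ∈ Finset.Icc (n - τ) n, Bsel' t ω)
          else 0) <
          (if 0 < ∑ t ∈ Finset.Icc (n - τ) n, Bsel t ω then
            (∑ t ∈ Finset.Icc (n - τ) n, Bsel t ω * Z t ω) /
              (∑ t ∈ Finset.Icc (n - τ) n, Bsel t ω)
          else 0)
        then (1 : ℝ≥0∞) else 0) ∂P with hIdef
  -- trivial bound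
  have Htriv : I ≤ ENNReal.ofReal ((τ:ℝ) + 1) := by
    rw [hIdef]
    have hcard : (Finset.Icc n₀ (n₀ + τ)).card = τ + 1 := by
      rw [Nat.card_Icc]; omega
    have hpt : ∀ ω, (∑ n ∈ Finset.Icc n₀ (n₀ + τ),
        (if n ∈ Λ ω ∧
            (if 0 < ∑ t ∈ Finset.Icc (n - τ) n, Bsel' t ω then
              (∑ t ∈ Finset.Icc (n - τ) n, Bsel' t ω * Z' t ω) /
                (∑ t ∈ Finset.Icc (n - τ) n, Bsel' t ω)
            else 0) <
            (if 0 < ∑ t ∈ Finset.Icc (n - τ) n, Bsel t ω then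
              (∑ t ∈ Finset.Icc (n - τ) n, Bsel t ω * Z t ω) /
                (∑ t ∈ Finset.Icc (n - τ) n, Bsel t ω)
            else 0)
          then (1 : ℝ≥0∞) else 0))
        ≤ (fun _ω : Ω => ((τ + 1 : ℕ) : ℝ≥0∞)) ω := by
      intro ω
      refine le_trans (Finset.sum_le_sum (g := fun _ => (1:ℝ≥0∞)) (fun n _ => ?_))
        (le_of_eq ?_)
      · split_ifs <;> simp
      · rw [Finset.sum_const, hcard]
        simp
    refine le_trans (lintegral_mono hpt) ?_
    rw [lintegral_const]
    simp only [measure_univ, mul_one]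
    rw [← ENNReal.ofReal_natCast]
    apply ENNReal.ofReal_le_ofReal
    push_cast
    linarith
  -- probabilistic bound
  have hT1 : ∀ s, ∀ ω, T s ω ≤ 1 := by
    intro s ω
    rw [hTdef]
    by_cases hex : ∃ m, m ∈ Finset.Icc n₀ (n₀ + τ) ∧ (m ∈ Λs s ω ∧ (A1 m s ω ∨ A2 m s ω))
    · obtain ⟨m, hm, hcm⟩ := hex
      calc (∑ n ∈ Finset.Icc n₀ (n₀ + τ),
            (if n ∈ Λs s ω ∧ (A1 n s ω ∨ A2 n s ω) then (1:ℝ≥0∞) else 0))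
          ≤ ∑ n ∈ Finset.Icc n₀ (n₀ + τ), (if n = m then (1:ℝ≥0∞) else 0) := by
            apply Finset.sum_le_sum
            intro n hn
            by_cases hc : n ∈ Λs s ω ∧ (A1 n s ω ∨ A2 n s ω)
            · rw [if_pos hc, if_pos ?_]
              have h1 : n ∈ Λs s ω ∩ Set.Icc n₀ (n₀ + τ) :=
                ⟨hc.1, by simpa [Set.mem_Icc] using Finset.mem_Icc.1 hn⟩
              have h2 : m ∈ Λs s ω ∩ Set.Icc n₀ (n₀ + τ) :=
                ⟨hcm.1, by simpa [Set.mem_Icc] using Finset.mem_Icc.1 hm⟩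
              exact hone s ω h1 h2
            · rw [if_neg hc]
              exact zero_le
        _ = 1 := by rw [Finset.sum_ite_eq' (Finset.Icc n₀ (n₀ + τ)) m fun _ => (1:ℝ≥0∞),
              if_pos hm]
    · have hzero : (∑ n ∈ Finset.Icc n₀ (n₀ + τ),
          (if n ∈ Λs s ω ∧ (A1 n s ω ∨ A2 n s ω) then (1:ℝ≥0∞) else 0)) = 0 :=
        Finset.sum_eq_zero fun n hn => if_neg (fun hc => hex ⟨n, hn, hc⟩)
      exact le_trans (le_of_eq hzero) (zero_le)
  have hTprob : ∀ s, 1 ≤ s → ∫⁻ ω, T s ω ∂P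
      ≤ ENNReal.ofReal (K * Real.exp (-(a * s))) := by
    intro s hs1
    have hdev1 : ∀ n, ∫⁻ ω, (if A1 n s ω then (1:ℝ≥0∞) else 0) ∂P
        ≤ ENNReal.ofReal (Real.exp (2 * Δ) * Real.exp (-(a * s))) := by
      intro n
      have h := dev_bound P (fun i => (F i : MeasurableSpace Ω)) hGle hGmono Bsel Z
        hB01 hBm hmZ hFmeasZ hZb hindZ ε Δ hε hΔ s n τ hs1
      simp only [hA1def]
      exact h
    have hdev2 : ∀ n, ∫⁻ ω, (if A2 n s ω then (1:ℝ≥0∞) else 0) ∂P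
        ≤ ENNReal.ofReal (Real.exp (2 * Δ) * Real.exp (-(a * s))) := by
      intro n
      have h := dev_bound P (fun i => (F i : MeasurableSpace Ω)) hGle hGmono Bsel' X'
        hB01' hBm' hmX' hFmeasX' hX'b hindX' ε Δ hε hΔ s n τ hs1
      simp only [hA2def]
      exact h
    have hptT : ∀ ω, T s ω ≤ ∑ n ∈ Finset.Icc n₀ (n₀ + τ),
        ((if A1 n s ω then (1:ℝ≥0∞) else 0) + (if A2 n s ω then (1:ℝ≥0∞) else 0)) := by
      intro ω
      rw [hTdef]
      apply Finset.sum_le_sum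
      intro n _
      by_cases hc : n ∈ Λs s ω ∧ (A1 n s ω ∨ A2 n s ω)
      · rw [if_pos hc]
        rcases hc.2 with h | h
        · rw [if_pos h]
          exact le_add_right le_rfl
        · rw [if_pos (show A2 n s ω from h)]
          exact le_add_left le_rfl
      · rw [if_neg hc]
        exact zero_le
    have hmeas1 : ∀ n, Measurable (fun ω => (if A1 n s ω then (1:ℝ≥0∞) else 0)) :=
      fun n => Measurable.ite (hA1set n s) measurable_const measurable_const
    have hmeas2 : ∀ n, Measurable (fun ω => (if A2 n s ω then (1:ℝ≥0∞) else 0)) :=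
      fun n => Measurable.ite (hA2set n s) measurable_const measurable_const
    calc ∫⁻ ω, T s ω ∂P
        ≤ ∫⁻ ω, ∑ n ∈ Finset.Icc n₀ (n₀ + τ),
            ((if A1 n s ω then (1:ℝ≥0∞) else 0)
              + (if A2 n s ω then (1:ℝ≥0∞) else 0)) ∂P := lintegral_mono hptT
      _ = ∑ n ∈ Finset.Icc n₀ (n₀ + τ), ∫⁻ ω,
            ((if A1 n s ω then (1:ℝ≥0∞) else 0)
              + (if A2 n s ω then (1:ℝ≥0∞) else 0)) ∂P :=
          lintegral_finset_sum _ (fun n _ => (hmeas1 n).add (hmeas2 n))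
      _ = ∑ n ∈ Finset.Icc n₀ (n₀ + τ),
            ((∫⁻ ω, (if A1 n s ω then (1:ℝ≥0∞) else 0) ∂P)
              + ∫⁻ ω, (if A2 n s ω then (1:ℝ≥0∞) else 0) ∂P) := by
          refine Finset.sum_congr rfl fun n _ => ?_
          exact lintegral_add_left (hmeas1 n) _
      _ ≤ ∑ _n ∈ Finset.Icc n₀ (n₀ + τ),
            (ENNReal.ofReal (Real.exp (2 * Δ) * Real.exp (-(a * s)))
              + ENNReal.ofReal (Real.exp (2 * Δ) * Real.exp (-(a * s)))) :=
          Finset.sum_le_sum fun n _ => add_le_add (hdev1 n) (hdev2 n)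
      _ = ((τ + 1 : ℕ) : ℝ≥0∞) * (ENNReal.ofReal (Real.exp (2 * Δ) * Real.exp (-(a * s)))
              + ENNReal.ofReal (Real.exp (2 * Δ) * Real.exp (-(a * s)))) := by
          rw [Finset.sum_const, nsmul_eq_mul]
          congr 2
          rw [Nat.card_Icc]; omega
      _ = ENNReal.ofReal (K * Real.exp (-(a * s))) := by
          rw [← ENNReal.ofReal_add (by positivity) (by positivity),
            ← ENNReal.ofReal_natCast, ← ENNReal.ofReal_mul (by positivity)]
          congr 1
          rw [hKdef]
          push_cast
          ring
  have Hprob : I ≤ ENNReal.ofReal (Real.log K / a + 1 / a + 1) := by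
    rw [hIdef]
    calc (∫⁻ ω, ∑ n ∈ Finset.Icc n₀ (n₀ + τ), _ ∂P)
        ≤ ∫⁻ ω, ∑ s ∈ Finset.Icc 1 S₀, T s ω ∂P := lintegral_mono step1
      _ = ∑ s ∈ Finset.Icc 1 S₀, ∫⁻ ω, T s ω ∂P :=
          lintegral_finset_sum _ (fun s _ => hTmeas s)
      _ ≤ ∑ s ∈ Finset.Icc 1 S₀, ENNReal.ofReal (min 1 (K * Real.exp (-(a * s)))) := by
          apply Finset.sum_le_sum
          intro s hs
          obtain ⟨hs1, _⟩ := Finset.mem_Icc.1 hs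
          rcases le_total (1:ℝ) (K * Real.exp (-(a * s))) with hmin | hmin
          · rw [min_eq_left hmin]
            calc ∫⁻ ω, T s ω ∂P ≤ ∫⁻ _ω, (1:ℝ≥0∞) ∂P := lintegral_mono (hT1 s)
              _ = 1 := by simp
              _ = ENNReal.ofReal 1 := by simp
          · rw [min_eq_right hmin]
            exact hTprob s hs1
      _ = ENNReal.ofReal (∑ s ∈ Finset.Icc 1 S₀, min 1 (K * Real.exp (-(a * s)))) := by
          rw [ENNReal.ofReal_sum_of_nonneg]
          intro s _
          exact le_min (by norm_num) (by positivity)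
      _ ≤ ENNReal.ofReal (Real.log K / a + 1 / a + 1) :=
          ENNReal.ofReal_le_ofReal (sum_min_bound K a hK1 ha S₀)
  -- final arithmetic
  have hlogτ : 0 ≤ Real.log τ := by
    rcases Nat.eq_zero_or_pos τ with h | h
    · simp [h]
    · apply Real.log_nonneg
      exact_mod_cast Nat.one_le_iff_ne_zero.2 (by omega)
  have hbud : 4 * Real.log τ / (ε * Δ ^ 2) = 2 * Real.log τ / a := by
    rw [hadef]
    rw [div_div_eq_mul_div]
    ring_nf
  by_cases hΔ1 : Δ ≤ 1
  · by_cases hC : Real.log K + 1 ≤ 2 * Real.log τ + 3 * a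
    · refine le_trans Hprob (ENNReal.ofReal_le_ofReal ?_)
      rw [hbud]
      have h1 : Real.log K / a + 1 / a + 1 = (Real.log K + 1) / a + 1 := by
        field_simp
      have h2 : (Real.log K + 1) / a ≤ (2 * Real.log τ + 3 * a) / a :=
        (div_le_div_iff_of_pos_right ha).2 hC
      have h3 : (2 * Real.log τ + 3 * a) / a = 2 * Real.log τ / a + 3 := by
        field_simp
      linarith
    · push_neg at hC
      refine le_trans Htriv (ENNReal.ofReal_le_ofReal ?_)
      rw [hbud]
      by_cases hτ4 : 4 ≤ τ
      · have hNL := NL τ hτ4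
        have hKlog : Real.log K = Real.log (2 * ((τ:ℝ) + 1)) + 2 * Δ := by
          rw [hKdef, Real.log_mul (by positivity) (Real.exp_ne_zero _), Real.log_exp]
        have hβ : 3 * a < Real.log (2 * ((τ:ℝ) + 1)) + 3 - 2 * Real.log τ := by
          have h9 : Real.log K + 1 ≤ Real.log (2 * ((τ:ℝ) + 1)) + 3 := by
            rw [hKlog]; linarith
          linarith
        have hτ4R : (4:ℝ) ≤ (τ:ℝ) := by exact_mod_cast hτ4
        have h5 : ((τ:ℝ) - 3) * (3 * a)
            ≤ ((τ:ℝ) - 3) * (Real.log (2 * ((τ:ℝ) + 1)) + 3 - 2 * Real.log τ) :=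
          mul_le_mul_of_nonneg_left hβ.le (by linarith)
        have h6 : a * ((τ:ℝ) - 3) ≤ 2 * Real.log τ := by nlinarith
        have h7 : (τ:ℝ) - 3 ≤ 2 * Real.log τ / a := by
          rw [le_div_iff₀ ha]
          linarith
        linarith
      · have hτ3 : (τ:ℝ) ≤ 3 := by
          have h9 : τ ≤ 3 := by omega
          exact_mod_cast h9
        have h8 : 0 ≤ 2 * Real.log τ / a := by positivity
        linarith
  · -- Δ > 1 : the event set is empty
    push_neg at hΔ1
    have hnot : ∀ ω n, ¬ (n ∈ Λ ω ∧
        (if 0 < ∑ t ∈ Finset.Icc (n - τ) n, Bsel' t ω then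
          (∑ t ∈ Finset.Icc (n - τ) n, Bsel' t ω * Z' t ω) /
            (∑ t ∈ Finset.Icc (n - τ) n, Bsel' t ω)
        else 0) <
        (if 0 < ∑ t ∈ Finset.Icc (n - τ) n, Bsel t ω then
          (∑ t ∈ Finset.Icc (n - τ) n, Bsel t ω * Z t ω) /
            (∑ t ∈ Finset.Icc (n - τ) n, Bsel t ω)
        else 0)) := by
      intro ω n hc
      have hg := hgap ω n hc.1
      have hL : (0:ℝ) ≤ (if 0 < ∑ t ∈ Finset.Icc (n - τ) n, Bsel t ω then
          (∑ t ∈ Finset.Icc (n - τ) n, Bsel t ω * (∫ x, Z t x ∂P)) /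
            (∑ t ∈ Finset.Icc (n - τ) n, Bsel t ω) else 0) := by
        split_ifs with h
        · apply div_nonneg _ (le_of_lt h)
          apply Finset.sum_nonneg
          intro t _
          exact mul_nonneg (by rcases hB01 t ω with h' | h' <;> simp [h']) (hμZ t).1
        · exact le_rfl
      have hR : (if 0 < ∑ t ∈ Finset.Icc (n - τ) n, Bsel' t ω then
          (∑ t ∈ Finset.Icc (n - τ) n, Bsel' t ω * (∫ x, Z' t x ∂P)) /
            (∑ t ∈ Finset.Icc (n - τ) n, Bsel' t ω) else 0) ≤ 1 := by
        split_ifs with h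
        · rw [div_le_one h]
          apply Finset.sum_le_sum
          intro t _
          calc Bsel' t ω * (∫ x, Z' t x ∂P) ≤ Bsel' t ω * 1 :=
              mul_le_mul_of_nonneg_left (hμZ' t).2
                (by rcases hB01' t ω with h' | h' <;> simp [h'])
            _ = Bsel' t ω := mul_one _
        · norm_num
      linarith
    have hIzero : I = 0 := by
      rw [hIdef]
      have hz : ∀ ω, (∑ n ∈ Finset.Icc n₀ (n₀ + τ),
          (if n ∈ Λ ω ∧
              (if 0 < ∑ t ∈ Finset.Icc (n - τ) n, Bsel' t ω then
                (∑ t ∈ Finset.Icc (n - τ) n, Bsel' t ω * Z' t ω) /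
                  (∑ t ∈ Finset.Icc (n - τ) n, Bsel' t ω)
              else 0) <
              (if 0 < ∑ t ∈ Finset.Icc (n - τ) n, Bsel t ω then
                (∑ t ∈ Finset.Icc (n - τ) n, Bsel t ω * Z t ω) /
                  (∑ t ∈ Finset.Icc (n - τ) n, Bsel t ω)
              else 0)
            then (1 : ℝ≥0∞) else 0)) = 0 := by
        intro ω
        exact Finset.sum_eq_zero fun n _ => if_neg (hnot ω n)
      rw [lintegral_congr hz]
      simp
    rw [hIzero]
    exact zero_le
end
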